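/- arXiv:0803.2076 — 4 statements merged into one kernel-verified Lean document; each statement's English description precedes it below -/
import Mathlib

section
/- The set W⁰ = {w ∈ W'_aff : w•0 is restricted and dominant} is finite, and the map W⁰ → W sending an element t_λ·v (λ ∈ X, v ∈ W) to its finite Weyl group component v is a bijection. -/
set_option linter.unusedSectionVars false
set_option maxHeartbeats 1000000


/-- A package of data and axioms encoding a finite reduced crystallographic root system
`R` spanning a real vector space `E`, with a chosen system of positive roots `Rpos`,
simple roots `simples`, coroot pairing `coroot` (so `coroot α x = ⟨x, α∨⟩`),
Weyl group `W` (as a group of linear automorphisms of `E`), longest element `w0`,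
half-sum of positive roots `rho`, and an integer `p` with `⟨ρ, α∨⟩ < p` for all
positive roots `α` (i.e. `p` is bigger than the Coxeter number). -/
structure RootSystemData (E : Type) [AddCommGroup E] [Module ℝ E] : Type where
  R : Finset E
  Rpos : Finset E
  simples : Finset E
  coroot : E → (E →ₗ[ℝ] ℝ)
  W : Subgroup (E ≃ₗ[ℝ] E)
  w0 : E ≃ₗ[ℝ] E
  rho : E
  p : ℤ
  finiteDim : FiniteDimensional ℝ E
  span_eq : Submodule.span ℝ (R : Set E) = ⊤
  zero_not_mem : (0 : E) ∉ R
  reduced : ∀ α ∈ R, ∀ c : ℝ, c • α ∈ R → c = 1 ∨ c = -1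
  rpos_subset : Rpos ⊆ R
  neg_mem : ∀ α ∈ R, -α ∈ R
  pos_iff : ∀ α ∈ R, (α ∈ Rpos ↔ -α ∉ Rpos)
  simples_subset : simples ⊆ Rpos
  pos_sum_simples : ∀ α ∈ Rpos, ∃ c : E → ℕ, α = ∑ β ∈ simples, (c β : ℝ) • β
  coroot_self : ∀ α ∈ R, coroot α α = 2
  crystallographic : ∀ α ∈ R, ∀ β ∈ R, ∃ n : ℤ, coroot α β = (n : ℝ)
  reflection_mem : ∀ α ∈ R, ∀ β ∈ R, β - coroot α β • α ∈ R
  W_gen : W = Subgroup.closure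
    {s : E ≃ₗ[ℝ] E | ∃ α ∈ R, ∀ x : E, s x = x - coroot α x • α}
  W_root_stable : ∀ v ∈ W, ∀ α ∈ R, v α ∈ R
  W_equivariant : ∀ v ∈ W, ∀ α x : E, coroot (v α) (v x) = coroot α x
  w0_mem : w0 ∈ W
  w0_neg : ∀ α ∈ Rpos, -(w0 α) ∈ Rpos
  w0_sq : w0 * w0 = 1
  nondeg : ∀ x : E, (∀ α ∈ R, coroot α x = 0) → x = 0
  rho_def : (2 : ℝ) • rho = ∑ α ∈ Rpos, α
  rho_simple : ∀ α ∈ simples, coroot α rho = 1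
  p_pos : 0 < p
  p_gt : ∀ α ∈ Rpos, coroot α rho < (p : ℝ)

namespace RootSystemData

variable {E : Type} [AddCommGroup E] [Module ℝ E] [DecidableEq E] (D : RootSystemData E)

/-- Membership in the weight lattice `X = {λ ∈ E : ⟨λ, α∨⟩ ∈ ℤ for all α ∈ R}`. -/
def IsWeight (x : E) : Prop := ∀ α ∈ D.R, ∃ n : ℤ, D.coroot α x = (n : ℝ)

/-- A weight `μ` is dominant if `⟨μ, α∨⟩ ≥ 0` for all simple roots `α`. -/
def IsDominant (μ : E) : Prop := ∀ α ∈ D.simples, 0 ≤ D.coroot α μ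

/-- A weight `μ` is restricted if `⟨μ, α∨⟩ ≤ p - 1` for all simple roots `α`. -/
def IsRestricted (μ : E) : Prop := ∀ α ∈ D.simples, D.coroot α μ ≤ (D.p : ℝ) - 1

/-- The value of the dot-action of the element `t_lam · v` of the extended affine Weyl
group `W'_aff = W ⋉ X` on the weight `0`:  `(t_lam · v) • 0 = v(0 + ρ) - ρ + p • lam`. -/
def dotZero (v : E ≃ₗ[ℝ] E) (lam : E) : E := v D.rho - D.rho + (D.p : ℝ) • lam

/-- The condition `t_lam · v ∈ W⁰`, i.e. `(t_lam · v) • 0` is restricted and dominant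
(together with the requirements `v ∈ W`, `lam ∈ X`). -/
def InW0 (v : E ≃ₗ[ℝ] E) (lam : E) : Prop :=
  v ∈ D.W ∧ D.IsWeight lam ∧ D.IsDominant (D.dotZero v lam) ∧ D.IsRestricted (D.dotZero v lam)

/-- The Iwahori–Matsumoto length of the element `w · t_x` of `W'_aff`:
`ℓ(w·t_x) = Σ_{α ∈ R⁺ ∩ w⁻¹(R⁺)} |⟨x,α∨⟩| + Σ_{α ∈ R⁺ ∩ w⁻¹(R⁻)} |1 + ⟨x,α∨⟩|`. -/
noncomputable def len (w : E ≃ₗ[ℝ] E) (x : E) : ℝ :=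
  (∑ α ∈ D.Rpos.filter (fun α => w α ∈ D.Rpos), |D.coroot α x|) +
    (∑ α ∈ D.Rpos.filter (fun α => -(w α) ∈ D.Rpos), |1 + D.coroot α x|)

/-- The length of `t_lam · v = v · t_{v⁻¹ lam}`. -/
noncomputable def lenT (v : E ≃ₗ[ℝ] E) (lam : E) : ℝ := D.len v (v.symm lam)

/-- auxiliary positive definite W-invariant bilinear form -/
noncomputable def bform : E →ₗ[ℝ] E →ₗ[ℝ] ℝ :=
  LinearMap.mk₂ ℝ (fun x y => ∑ γ ∈ D.R, D.coroot γ x * D.coroot γ y)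
    (fun m₁ m₂ n => by simp [map_add, add_mul, Finset.sum_add_distrib])
    (fun c m n => by simp [map_smul, smul_eq_mul, mul_assoc, Finset.mul_sum])
    (fun m n₁ n₂ => by simp [map_add, mul_add, Finset.sum_add_distrib])
    (fun c m n => by
      simp only [map_smul, smul_eq_mul, Finset.mul_sum]
      exact Finset.sum_congr rfl fun γ _ => by ring)

lemma bform_apply (x y : E) : D.bform x y = ∑ γ ∈ D.R, D.coroot γ x * D.coroot γ y := rfl

lemma bform_comm (x y : E) : D.bform x y = D.bform y x := by
  simp [bform_apply, mul_comm]

lemma bform_self_nonneg (x : E) : 0 ≤ D.bform x x := by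
  rw [bform_apply]
  exact Finset.sum_nonneg fun γ _ => mul_self_nonneg _

lemma eq_zero_of_bform_self {x : E} (h : D.bform x x = 0) : x = 0 := by
  apply D.nondeg
  intro α hα
  rw [bform_apply] at h
  have h0 := (Finset.sum_eq_zero_iff_of_nonneg
    (fun γ (_ : γ ∈ D.R) => mul_self_nonneg (D.coroot γ x))).mp h α hα
  exact mul_self_eq_zero.mp h0

lemma bform_self_pos {x : E} (h : x ≠ 0) : 0 < D.bform x x :=
  lt_of_le_of_ne (D.bform_self_nonneg x) (fun h' => h (D.eq_zero_of_bform_self h'.symm))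

/-- the reflection in a root, as a linear equivalence -/
noncomputable def sRefl (α : E) (hα : α ∈ D.R) : E ≃ₗ[ℝ] E :=
  LinearEquiv.ofLinear (LinearMap.id - (D.coroot α).smulRight α)
    (LinearMap.id - (D.coroot α).smulRight α)
    (by
      ext x
      simp [LinearMap.smulRight_apply, map_sub, map_smul, D.coroot_self α hα, sub_smul,
        smul_smul]
      module)
    (by
      ext x
      simp [LinearMap.smulRight_apply, map_sub, map_smul, D.coroot_self α hα, sub_smul,
        smul_smul]
      module)

lemma sRefl_apply (α : E) (hα : α ∈ D.R) (x : E) :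
    D.sRefl α hα x = x - D.coroot α x • α := rfl

lemma sRefl_mem (α : E) (hα : α ∈ D.R) : D.sRefl α hα ∈ D.W := by
  rw [D.W_gen]
  exact Subgroup.subset_closure ⟨α, hα, fun x => rfl⟩

lemma bform_W {v : E ≃ₗ[ℝ] E} (hv : v ∈ D.W) (x y : E) :
    D.bform (v x) (v y) = D.bform x y := by
  rw [bform_apply, bform_apply]
  refine Finset.sum_nbij' (fun γ => v.symm γ) (fun γ => v γ) ?_ ?_ ?_ ?_ ?_
  · intro γ hγ
    exact D.W_root_stable v⁻¹ (inv_mem hv) γ hγ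
  · intro γ hγ
    exact D.W_root_stable v hv γ hγ
  · intro γ _; exact v.apply_symm_apply γ
  · intro γ _; exact v.symm_apply_apply γ
  · intro γ hγ
    have h1 : D.coroot (v (v.symm γ)) (v x) = D.coroot (v.symm γ) x :=
      D.W_equivariant v hv (v.symm γ) x
    have h2 : D.coroot (v (v.symm γ)) (v y) = D.coroot (v.symm γ) y :=
      D.W_equivariant v hv (v.symm γ) y
    rw [v.apply_symm_apply] at h1 h2
    rw [h1, h2]


lemma root_ne_zero {α : E} (hα : α ∈ D.R) : α ≠ 0 :=
  fun h => D.zero_not_mem (h ▸ hα)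

lemma bform_root_pos {α : E} (hα : α ∈ D.R) : 0 < D.bform α α :=
  D.bform_self_pos (D.root_ne_zero hα)

lemma coroot_mul_bform {α : E} (hα : α ∈ D.R) (x : E) :
    D.coroot α x * D.bform α α = 2 * D.bform x α := by
  have hs := D.bform_W (D.sRefl_mem α hα) x α
  have hsa : D.sRefl α hα α = -α := by
    rw [sRefl_apply, D.coroot_self α hα]
    module
  rw [sRefl_apply, hsa] at hs
  simp only [map_sub, map_neg, map_smul, LinearMap.sub_apply, LinearMap.neg_apply,
    LinearMap.smul_apply, smul_eq_mul] at hs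
  nlinarith [hs]

lemma coroot_neg_root {α : E} (hα : α ∈ D.R) (x : E) :
    D.coroot (-α) x = - D.coroot α x := by
  have hna : -α ∈ D.R := D.neg_mem α hα
  have h1 := D.coroot_mul_bform hna x
  have h2 := D.coroot_mul_bform hα x
  have hBB : D.bform (-α) (-α) = D.bform α α := by simp [map_neg]
  have hxB : D.bform x (-α) = - D.bform x α := by simp [map_neg]
  rw [hBB, hxB] at h1
  have hne : D.bform α α ≠ 0 := ne_of_gt (D.bform_root_pos hα)
  have hsum : (D.coroot (-α) x + D.coroot α x) * D.bform α α = 0 := by ring_nf; linarith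
  rcases mul_eq_zero.mp hsum with h | h
  · linarith
  · exact absurd h hne

lemma coroot_pos_iff {α β : E} (hα : α ∈ D.R) :
    0 < D.coroot α β ↔ 0 < D.bform α β := by
  have h := D.coroot_mul_bform hα β
  have hBB : 0 < D.bform α α := D.bform_root_pos hα
  rw [D.bform_comm α β]
  constructor
  · intro hc; nlinarith
  · intro hb; nlinarith

lemma coroot_int {α β : E} (hα : α ∈ D.R) (hβ : β ∈ D.R) :
    ∃ n : ℤ, D.coroot α β = (n : ℝ) := D.crystallographic α hα β hβ

lemma coroot_ge_one {α β : E} (hα : α ∈ D.R) (hβ : β ∈ D.R) (h : 0 < D.bform α β) :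
    1 ≤ D.coroot α β := by
  obtain ⟨n, hn⟩ := D.coroot_int hα hβ
  have : 0 < D.coroot α β := (D.coroot_pos_iff hα).mpr h
  rw [hn] at this ⊢
  exact_mod_cast (by exact_mod_cast this : 0 < n)

lemma bform_simple_rho {μ : E} (hμ : μ ∈ D.simples) :
    D.bform μ D.rho = D.bform μ μ / 2 := by
  have hR : μ ∈ D.R := D.rpos_subset (D.simples_subset hμ)
  have h := D.coroot_mul_bform hR D.rho
  rw [D.rho_simple μ hμ, one_mul, D.bform_comm D.rho μ] at h
  linarith

lemma bform_simple_rho_pos {μ : E} (hμ : μ ∈ D.simples) : 0 < D.bform μ D.rho := by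
  rw [D.bform_simple_rho hμ]
  have := D.bform_root_pos (D.rpos_subset (D.simples_subset hμ))
  linarith

lemma bform_rho_pos {β : E} (hβ : β ∈ D.Rpos) : 0 < D.bform β D.rho := by
  obtain ⟨c, hc⟩ := D.pos_sum_simples β hβ
  have hβ0 : β ≠ 0 := D.root_ne_zero (D.rpos_subset hβ)
  have hexp : D.bform β D.rho = ∑ μ ∈ D.simples, (c μ : ℝ) * D.bform μ D.rho := by
    rw [hc]
    simp [map_sum, Finset.sum_apply, map_smul, smul_eq_mul]
  rw [hexp]
  have hnonneg : ∀ μ ∈ D.simples, 0 ≤ (c μ : ℝ) * D.bform μ D.rho := fun μ hμ =>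
    mul_nonneg (Nat.cast_nonneg _) (le_of_lt (D.bform_simple_rho_pos hμ))
  have hex : ∃ μ ∈ D.simples, 0 < (c μ : ℝ) * D.bform μ D.rho := by
    by_contra hall
    push_neg at hall
    have : ∀ μ ∈ D.simples, (c μ : ℝ) • μ = (0:E) := by
      intro μ hμ
      have h1 := hall μ hμ
      have h2 := hnonneg μ hμ
      have : (c μ : ℝ) * D.bform μ D.rho = 0 := le_antisymm h1 h2
      rcases mul_eq_zero.mp this with h | h
      · rw [h, zero_smul]
      · exact absurd h (ne_of_gt (D.bform_simple_rho_pos hμ))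
    have : β = 0 := by
      rw [hc]
      exact Finset.sum_eq_zero this
    exact hβ0 this
  obtain ⟨μ₀, hμ₀, hpos⟩ := hex
  calc (0:ℝ) < (c μ₀ : ℝ) * D.bform μ₀ D.rho := hpos
    _ ≤ ∑ μ ∈ D.simples, (c μ : ℝ) * D.bform μ D.rho := Finset.single_le_sum hnonneg hμ₀

lemma mem_Rpos_iff {β : E} (hβ : β ∈ D.R) : β ∈ D.Rpos ↔ 0 < D.bform β D.rho := by
  constructor
  · exact D.bform_rho_pos
  · intro h
    by_contra hn
    have : -β ∈ D.Rpos := by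
      have := D.pos_iff β hβ
      tauto
    have h2 := D.bform_rho_pos this
    simp only [map_neg, LinearMap.neg_apply] at h2
    linarith


open Classical in
/-- indecomposable positive roots -/
noncomputable def Delta : Finset E :=
  D.Rpos.filter (fun β => ¬ ∃ γ ∈ D.Rpos, ∃ δ ∈ D.Rpos, β = γ + δ)

lemma Delta_subset : D.Delta ⊆ D.Rpos := Finset.filter_subset _ _

lemma Delta_not_dec {β : E} (h : β ∈ D.Delta) :
    ¬ ∃ γ ∈ D.Rpos, ∃ δ ∈ D.Rpos, β = γ + δ := by
  classical
  exact (Finset.mem_filter.mp h).2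

lemma mem_Delta_of_not_dec {β : E} (hβ : β ∈ D.Rpos)
    (h : ¬ ∃ γ ∈ D.Rpos, ∃ δ ∈ D.Rpos, β = γ + δ) : β ∈ D.Delta := by
  classical
  exact Finset.mem_filter.mpr ⟨hβ, h⟩

lemma pos_nsum_delta {β : E} (hβ : β ∈ D.Rpos) :
    ∃ c : E → ℕ, β = ∑ δ ∈ D.Delta, (c δ : ℝ) • δ := by
  classical
  suffices key : ∀ n : ℕ, ∀ β ∈ D.Rpos,
      (D.Rpos.filter (fun γ => D.bform γ D.rho < D.bform β D.rho)).card = n →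
      ∃ c : E → ℕ, β = ∑ δ ∈ D.Delta, (c δ : ℝ) • δ by
    exact key _ β hβ rfl
  intro n
  induction n using Nat.strong_induction_on with
  | _ n ih =>
    intro β hβ hcard
    by_cases hind : β ∈ D.Delta
    · refine ⟨fun δ => if δ = β then 1 else 0, ?_⟩
      simp [apply_ite (Nat.cast : ℕ → ℝ), ite_smul, Finset.sum_ite_eq', hind]
    · have hdec : ∃ γ ∈ D.Rpos, ∃ δ ∈ D.Rpos, β = γ + δ := by
        by_contra h
        exact hind (D.mem_Delta_of_not_dec hβ h)
      obtain ⟨γ, hγ, δ, hδ, hsum⟩ := hdec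
      have hfβ : D.bform β D.rho = D.bform γ D.rho + D.bform δ D.rho := by
        rw [hsum, map_add, LinearMap.add_apply]
      have hγlt : D.bform γ D.rho < D.bform β D.rho := by
        have := D.bform_rho_pos hδ; linarith
      have hδlt : D.bform δ D.rho < D.bform β D.rho := by
        have := D.bform_rho_pos hγ; linarith
      have hcardlt : ∀ ε ∈ D.Rpos, D.bform ε D.rho < D.bform β D.rho →
          (D.Rpos.filter (fun γ' => D.bform γ' D.rho < D.bform ε D.rho)).card < n := by
        intro ε hε hεlt
        rw [← hcard]
        apply Finset.card_lt_card
        constructor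
        · intro x hx
          rw [Finset.mem_filter] at hx ⊢
          exact ⟨hx.1, lt_trans hx.2 hεlt⟩
        · intro hsub
          have : ε ∈ D.Rpos.filter (fun γ' => D.bform γ' D.rho < D.bform β D.rho) :=
            Finset.mem_filter.mpr ⟨hε, hεlt⟩
          have := hsub this
          rw [Finset.mem_filter] at this
          exact lt_irrefl _ this.2
      obtain ⟨cγ, hcγ⟩ := ih _ (hcardlt γ hγ hγlt) γ hγ rfl
      obtain ⟨cδ, hcδ⟩ := ih _ (hcardlt δ hδ hδlt) δ hδ rfl
      refine ⟨fun ε => cγ ε + cδ ε, ?_⟩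
      rw [hsum, hcγ, hcδ, ← Finset.sum_add_distrib]
      apply Finset.sum_congr rfl
      intro ε _
      push_cast
      rw [add_smul]

lemma sub_mem_R_of_pos_pairing {δ δ' : E} (hδ : δ ∈ D.R) (hδ' : δ' ∈ D.R)
    (hne : δ ≠ δ') (hnne : δ ≠ -δ') (hpos : 0 < D.bform δ δ') : δ - δ' ∈ D.R := by
  have hk := D.coroot_ge_one hδ' hδ (by rwa [D.bform_comm])
  have hk' := D.coroot_ge_one hδ hδ' hpos
  obtain ⟨n, hn⟩ := D.coroot_int hδ' hδ
  obtain ⟨n', hn'⟩ := D.coroot_int hδ hδ'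
  -- strict Cauchy-Schwarz
  have hBδ : 0 < D.bform δ δ := D.bform_root_pos hδ
  have hBδ' : 0 < D.bform δ' δ' := D.bform_root_pos hδ'
  have hw : D.bform δ' δ' • δ - D.bform δ δ' • δ' ≠ 0 := by
    intro h0
    have hprop : δ = (D.bform δ δ' / D.bform δ' δ') • δ' := by
      have h1 : D.bform δ' δ' • δ = D.bform δ δ' • δ' := by
        rw [sub_eq_zero] at h0; exact h0
      rw [div_eq_mul_inv, mul_comm, mul_smul, ← h1, smul_smul,
        inv_mul_cancel₀ (ne_of_gt hBδ'), one_smul]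
    have := D.reduced δ' hδ' _ (by rw [← hprop]; exact hδ)
    rcases this with h | h
    · rw [h, one_smul] at hprop; exact hne hprop
    · rw [h, neg_one_smul] at hprop; exact hnne hprop
  have hCS : D.bform δ δ' * D.bform δ δ' < D.bform δ δ * D.bform δ' δ' := by
    have hww := D.bform_self_pos hw
    simp only [map_sub, map_smul, LinearMap.sub_apply, LinearMap.smul_apply,
      smul_eq_mul] at hww
    have hsymm : D.bform δ' δ = D.bform δ δ' := D.bform_comm δ' δ
    rw [hsymm] at hww
    have key : 0 < D.bform δ' δ' * (D.bform δ δ * D.bform δ' δ' - D.bform δ δ' * D.bform δ δ') := by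
      nlinarith [hww]
    rcases mul_pos_iff.mp key with ⟨_, h2⟩ | ⟨h1, _⟩
    · linarith
    · linarith
  -- coroot products
  have h1 := D.coroot_mul_bform hδ' δ
  have h2 := D.coroot_mul_bform hδ δ'
  rw [hn] at h1
  rw [hn'] at h2
  rw [D.bform_comm δ δ'] at h1
  rw [D.bform_comm δ' δ] at h2
  have hnn' : (n : ℝ) * n' < 4 := by
    have hprod : (n : ℝ) * n' * (D.bform δ' δ' * D.bform δ δ) =
        4 * (D.bform δ δ' * D.bform δ δ') := by
      calc (n : ℝ) * n' * (D.bform δ' δ' * D.bform δ δ)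
          = ((n:ℝ) * D.bform δ' δ') * ((n':ℝ) * D.bform δ δ) := by ring
        _ = (2 * D.bform δ δ') * (2 * D.bform δ δ') := by rw [h1, h2, D.bform_comm δ' δ]
        _ = 4 * (D.bform δ δ' * D.bform δ δ') := by ring
    nlinarith [hCS, hBδ, hBδ', hprod]
  have hcase : n = 1 ∨ n' = 1 := by
    have hn1 : 1 ≤ n := by exact_mod_cast hn ▸ hk
    have hn'1 : 1 ≤ n' := by exact_mod_cast hn' ▸ hk'
    have : n * n' < 4 := by exact_mod_cast hnn'
    by_contra hc
    push_neg at hc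
    have : 2 ≤ n := by omega
    have : 2 ≤ n' := by omega
    nlinarith
  rcases hcase with h | h
  · have := D.reflection_mem δ' hδ' δ hδ
    rw [hn, h] at this
    simpa using this
  · have := D.reflection_mem δ hδ δ' hδ'
    rw [hn', h] at this
    have h2 : δ' - δ ∈ D.R := by simpa using this
    have := D.neg_mem _ h2
    simpa using this

lemma delta_obtuse {δ δ' : E} (h : δ ∈ D.Delta) (h' : δ' ∈ D.Delta) (hne : δ ≠ δ') :
    D.bform δ δ' ≤ 0 := by
  by_contra hpos
  push_neg at hpos
  have hδp := D.Delta_subset h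
  have hδ'p := D.Delta_subset h'
  have hδR := D.rpos_subset hδp
  have hδ'R := D.rpos_subset hδ'p
  have hnne : δ ≠ -δ' := by
    intro h0
    have : -δ' ∉ D.Rpos := by
      have := D.pos_iff δ' hδ'R
      tauto
    exact this (h0 ▸ hδp)
  have hsub := D.sub_mem_R_of_pos_pairing hδR hδ'R hne hnne hpos
  by_cases hs : δ - δ' ∈ D.Rpos
  · exact D.Delta_not_dec h ⟨δ', hδ'p, δ - δ', hs, by abel⟩
  · have : -(δ - δ') ∈ D.Rpos := by
      have := D.pos_iff _ hsub
      tauto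
    have h2 : δ' - δ ∈ D.Rpos := by rwa [neg_sub] at this
    exact D.Delta_not_dec h' ⟨δ, hδp, δ' - δ, h2, by abel⟩

private lemma max_sub_aux (a : ℝ) : max a 0 - max (-a) 0 = a := by
  rcases le_total a 0 with h | h
  · rw [max_eq_right h, max_eq_left (by linarith)]; ring
  · rw [max_eq_left h, max_eq_right (by linarith)]; ring

lemma delta_indep (x : E → ℝ) (h : ∑ δ ∈ D.Delta, x δ • δ = 0) :
    ∀ δ ∈ D.Delta, x δ = 0 := by
  set P : E → ℝ := fun δ => max (x δ) 0 with hP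
  set N : E → ℝ := fun δ => max (-(x δ)) 0 with hN
  have hPnn : ∀ δ, 0 ≤ P δ := fun δ => le_max_right _ _
  have hNnn : ∀ δ, 0 ≤ N δ := fun δ => le_max_right _ _
  have hPN : ∀ δ, P δ - N δ = x δ := fun δ => max_sub_aux (x δ)
  have hPN0 : ∀ δ, P δ * N δ = 0 := by
    intro δ
    rcases le_total (x δ) 0 with h0 | h0
    · rw [hP]; simp only; rw [max_eq_right h0, zero_mul]
    · rw [hN]; simp only; rw [max_eq_right (by linarith), mul_zero]
  have hweq : ∑ δ ∈ D.Delta, P δ • δ = ∑ δ ∈ D.Delta, N δ • δ := by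
    have hz : (∑ δ ∈ D.Delta, P δ • δ) - ∑ δ ∈ D.Delta, N δ • δ = 0 := by
      rw [← Finset.sum_sub_distrib, ← h]
      apply Finset.sum_congr rfl
      intro δ _
      rw [← sub_smul, hPN]
    exact sub_eq_zero.mp hz
  have expand : ∀ (c d : E → ℝ),
      D.bform (∑ δ ∈ D.Delta, c δ • δ) (∑ δ' ∈ D.Delta, d δ' • δ') =
        ∑ δ ∈ D.Delta, ∑ δ' ∈ D.Delta, c δ * (d δ' * D.bform δ δ') := by
    intro c d
    simp only [map_sum, LinearMap.sum_apply, map_smul, LinearMap.smul_apply, smul_eq_mul,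
      Finset.mul_sum]
    rw [Finset.sum_comm]
    apply Finset.sum_congr rfl
    intro δ _
    apply Finset.sum_congr rfl
    intro δ' _
    ring
  have hle : D.bform (∑ δ ∈ D.Delta, P δ • δ) (∑ δ ∈ D.Delta, P δ • δ) ≤ 0 := by
    have heq2 : D.bform (∑ δ ∈ D.Delta, P δ • δ) (∑ δ ∈ D.Delta, P δ • δ) =
        D.bform (∑ δ ∈ D.Delta, P δ • δ) (∑ δ' ∈ D.Delta, N δ' • δ') := by
      conv_lhs => rw [hweq]
      conv_rhs => rw [hweq]
    rw [heq2, expand]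
    apply Finset.sum_nonpos
    intro δ hδ
    apply Finset.sum_nonpos
    intro δ' hδ'
    by_cases hd : δ = δ'
    · subst hd
      rw [← mul_assoc, hPN0, zero_mul]
    · have hob := D.delta_obtuse hδ hδ' hd
      have hmn := mul_nonneg (hPnn δ) (hNnn δ')
      nlinarith [hob, hmn]
  have hw0 : ∑ δ ∈ D.Delta, P δ • δ = 0 :=
    D.eq_zero_of_bform_self (le_antisymm hle (D.bform_self_nonneg _))
  have hN0 : ∑ δ ∈ D.Delta, N δ • δ = 0 := by rw [← hweq]; exact hw0
  have hvanish : ∀ (c : E → ℝ), (∀ δ, 0 ≤ c δ) → (∑ δ ∈ D.Delta, c δ • δ = 0) →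
      ∀ δ ∈ D.Delta, c δ = 0 := by
    intro c hc hsum δ hδ
    have h0 : (0:ℝ) = ∑ δ ∈ D.Delta, c δ * D.bform δ D.rho := by
      have : D.bform (∑ δ ∈ D.Delta, c δ • δ) D.rho = 0 := by rw [hsum]; simp
      rw [← this, map_sum, LinearMap.sum_apply]
      apply Finset.sum_congr rfl
      intro δ'' _
      rw [map_smul, LinearMap.smul_apply, smul_eq_mul]
    have hterm := (Finset.sum_eq_zero_iff_of_nonneg (fun δ'' hδ'' =>
      mul_nonneg (hc δ'') (le_of_lt (D.bform_rho_pos (D.Delta_subset hδ''))))).mp h0.symm δ hδ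
    rcases mul_eq_zero.mp hterm with h | h
    · exact h
    · exact absurd h (ne_of_gt (D.bform_rho_pos (D.Delta_subset hδ)))
  intro δ hδ
  have := hvanish P hPnn hw0 δ hδ
  have := hvanish N hNnn hN0 δ hδ
  rw [← hPN δ]
  linarith

lemma sRefl_symm_apply (α : E) (hα : α ∈ D.R) (x : E) :
    (D.sRefl α hα).symm x = D.sRefl α hα x := rfl

lemma sRefl_invol (α : E) (hα : α ∈ D.R) (x : E) :
    D.sRefl α hα (D.sRefl α hα x) = x := by
  conv_lhs => rw [← D.sRefl_symm_apply α hα x]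
  exact (D.sRefl α hα).apply_symm_apply x

lemma coroot_reflect {δ : E} (hδ : δ ∈ D.R) (β y : E) :
    D.coroot (β - D.coroot δ β • δ) y = D.coroot β y - D.coroot δ y * D.coroot β δ := by
  have hv := D.sRefl_mem δ hδ
  have h := D.W_equivariant _ hv β (D.sRefl δ hδ y)
  rw [D.sRefl_invol δ hδ y] at h
  rw [show D.sRefl δ hδ β = β - D.coroot δ β • δ from rfl] at h
  rw [h, D.sRefl_apply, map_sub, map_smul, smul_eq_mul]

lemma delta_coeff_unique (a b : E → ℝ)
    (h : ∑ δ ∈ D.Delta, a δ • δ = ∑ δ ∈ D.Delta, b δ • δ) :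
    ∀ δ ∈ D.Delta, a δ = b δ := by
  have h0 : ∑ δ ∈ D.Delta, (a δ - b δ) • δ = 0 := by
    rw [show (fun δ => (a δ - b δ) • δ) = fun δ => a δ • δ - b δ • δ by
      funext δ; rw [sub_smul]]
    rw [Finset.sum_sub_distrib, h, sub_self]
  intro δ hδ
  have := D.delta_indep _ h0 δ hδ
  linarith

lemma sdelta_pos {δ β : E} (hδ : δ ∈ D.Delta) (hβ : β ∈ D.Rpos) (hne : β ≠ δ) :
    β - D.coroot δ β • δ ∈ D.Rpos := by
  have hδR := D.rpos_subset (D.Delta_subset hδ)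
  have hβR := D.rpos_subset hβ
  have hγR : β - D.coroot δ β • δ ∈ D.R := D.reflection_mem δ hδR β hβR
  by_contra hγn
  have hγneg : -(β - D.coroot δ β • δ) ∈ D.Rpos := by
    have := D.pos_iff _ hγR; tauto
  obtain ⟨c, hc⟩ := D.pos_nsum_delta hβ
  obtain ⟨d, hd⟩ := D.pos_nsum_delta hγneg
  obtain ⟨k, hk⟩ := D.coroot_int hδR hβR
  have e1 : ∑ δ' ∈ D.Delta, ((c δ' + d δ' : ℕ) : ℝ) • δ' =
      β + -(β - D.coroot δ β • δ) := by
    rw [hd, hc, ← Finset.sum_add_distrib]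
    apply Finset.sum_congr rfl
    intro δ' _
    push_cast
    rw [add_smul]
  have e2 : ∑ δ' ∈ D.Delta, (if δ' = δ then (k:ℝ) else 0) • δ' = (k:ℝ) • δ := by
    simp [ite_smul, Finset.sum_ite_eq', hδ]
  have hsum : ∑ δ' ∈ D.Delta,
      (((c δ' + d δ' : ℕ) : ℝ) - (if δ' = δ then (k:ℝ) else 0)) • δ' = 0 := by
    rw [show (fun δ' => (((c δ' + d δ' : ℕ) : ℝ) - (if δ' = δ then (k:ℝ) else 0)) • δ') =
      fun δ' => ((c δ' + d δ' : ℕ) : ℝ) • δ' - (if δ' = δ then (k:ℝ) else 0) • δ' by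
      funext δ'; rw [sub_smul]]
    rw [Finset.sum_sub_distrib, e1, e2, hk]
    abel
  have huniq := D.delta_indep _ hsum
  have hczero : ∀ δ' ∈ D.Delta, δ' ≠ δ → c δ' = 0 := by
    intro δ' hδ' hne'
    have := huniq δ' hδ'
    rw [if_neg hne', sub_zero] at this
    have : c δ' + d δ' = 0 := by exact_mod_cast this
    omega
  have hβeq : β = (c δ : ℝ) • δ := by
    rw [hc]
    rw [Finset.sum_eq_single_of_mem δ hδ]
    intro δ' hδ' hne'
    rw [hczero δ' hδ' hne']
    simp
  have := D.reduced δ hδR _ (by rw [← hβeq]; exact hβR)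
  rcases this with h1 | h1
  · rw [h1, one_smul] at hβeq
    exact hne hβeq
  · have : (0:ℝ) ≤ (c δ : ℝ) := Nat.cast_nonneg _
    rw [h1] at this
    linarith

lemma exists_delta_pos_pairing {β : E} (hβ : β ∈ D.Rpos) :
    ∃ δ ∈ D.Delta, 0 < D.bform δ β := by
  obtain ⟨c, hc⟩ := D.pos_nsum_delta hβ
  have hexp : ∀ x : E, D.bform β x = ∑ δ ∈ D.Delta, (c δ : ℝ) * D.bform δ x := by
    intro x
    conv_lhs => rw [hc]
    simp only [map_sum, LinearMap.sum_apply, map_smul, LinearMap.smul_apply, smul_eq_mul]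
  have hpos : 0 < ∑ δ ∈ D.Delta, (c δ : ℝ) * D.bform δ β := by
    rw [← hexp β]
    exact D.bform_root_pos (D.rpos_subset hβ)
  by_contra hall
  push_neg at hall
  have : ∑ δ ∈ D.Delta, (c δ : ℝ) * D.bform δ β ≤ 0 := by
    apply Finset.sum_nonpos
    intro δ hδ
    have h1 := hall δ hδ
    have h2 : (0:ℝ) ≤ (c δ : ℝ) := Nat.cast_nonneg _
    nlinarith
  linarith

/-- every coroot is an integral combination of the coroots of indecomposables -/
lemma coroot_decomp {β : E} (hβ : β ∈ D.R) :
    ∃ n : E → ℤ, ∀ y : E, D.coroot β y = ∑ δ ∈ D.Delta, (n δ : ℝ) * D.coroot δ y := by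
  classical
  have key : ∀ m : ℕ, ∀ β ∈ D.Rpos,
      (D.Rpos.filter (fun γ => D.bform γ D.rho < D.bform β D.rho)).card = m →
      ∃ n : E → ℤ, ∀ y : E, D.coroot β y = ∑ δ ∈ D.Delta, (n δ : ℝ) * D.coroot δ y := by
    intro m
    induction m using Nat.strong_induction_on with
    | _ m ih =>
      intro β hβ hcard
      by_cases hind : β ∈ D.Delta
      · refine ⟨fun δ => if δ = β then 1 else 0, fun y => ?_⟩
        simp [apply_ite (Int.cast : ℤ → ℝ), ite_mul, Finset.sum_ite_eq', hind]
      · obtain ⟨δ, hδ, hbf⟩ := D.exists_delta_pos_pairing hβ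
        have hδR := D.rpos_subset (D.Delta_subset hδ)
        have hβR := D.rpos_subset hβ
        have hne : β ≠ δ := fun h => hind (h ▸ hδ)
        have hγ : β - D.coroot δ β • δ ∈ D.Rpos := D.sdelta_pos hδ hβ hne
        have hk1 : 1 ≤ D.coroot δ β := D.coroot_ge_one hδR hβR hbf
        have hflt : D.bform (β - D.coroot δ β • δ) D.rho < D.bform β D.rho := by
          simp only [map_sub, map_smul, LinearMap.sub_apply, LinearMap.smul_apply,
            smul_eq_mul]
          have h1 := D.bform_rho_pos (D.Delta_subset hδ)
          nlinarith
        have hcardlt :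
            (D.Rpos.filter (fun γ' => D.bform γ' D.rho <
              D.bform (β - D.coroot δ β • δ) D.rho)).card < m := by
          rw [← hcard]
          apply Finset.card_lt_card
          constructor
          · intro x hx
            rw [Finset.mem_filter] at hx ⊢
            exact ⟨hx.1, lt_trans hx.2 hflt⟩
          · intro hsub
            have hmem : (β - D.coroot δ β • δ) ∈
                D.Rpos.filter (fun γ' => D.bform γ' D.rho < D.bform β D.rho) :=
              Finset.mem_filter.mpr ⟨hγ, hflt⟩
            have := hsub hmem
            rw [Finset.mem_filter] at this
            exact lt_irrefl _ this.2
        obtain ⟨n', hn'⟩ := ih _ hcardlt _ hγ rfl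
        obtain ⟨kβδ, hkβδ⟩ := D.coroot_int hβR hδR
        refine ⟨fun δ' => n' δ' + (if δ' = δ then kβδ else 0), fun y => ?_⟩
        have hrefl := D.coroot_reflect hδR β y
        have : D.coroot β y = D.coroot (β - D.coroot δ β • δ) y +
            D.coroot δ y * D.coroot β δ := by linarith
        rw [this, hn' y, hkβδ]
        rw [show (fun δ' => ((n' δ' + (if δ' = δ then kβδ else 0) : ℤ) : ℝ) *
            D.coroot δ' y) = fun δ' => (n' δ' : ℝ) * D.coroot δ' y +
            (if δ' = δ then (kβδ : ℝ) * D.coroot δ' y else 0) by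
          funext δ'
          by_cases hd : δ' = δ <;> simp [hd] <;> push_cast <;> ring]
        rw [Finset.sum_add_distrib, Finset.sum_ite_eq', if_pos hδ]
        ring
  by_cases hβpos : β ∈ D.Rpos
  · exact key _ β hβpos rfl
  · have hneg : -β ∈ D.Rpos := by
      have := D.pos_iff β hβ; tauto
    obtain ⟨n, hn⟩ := key _ (-β) hneg rfl
    refine ⟨fun δ => -(n δ), fun y => ?_⟩
    have hcn : D.coroot (-β) y = - D.coroot β y := by
      have := D.coroot_neg_root hβ y
      rw [this]
    have := hn y
    rw [hcn] at this
    have : D.coroot β y = - ∑ δ ∈ D.Delta, (n δ : ℝ) * D.coroot δ y := by linarith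
    rw [this, ← Finset.sum_neg_distrib]
    apply Finset.sum_congr rfl
    intro δ _
    push_cast
    ring

lemma Delta_subset_simples : D.Delta ⊆ D.simples := by
  intro δ₀ hδ₀
  obtain ⟨c, hc⟩ := D.pos_sum_simples δ₀ (D.Delta_subset hδ₀)
  have hall : ∀ μ ∈ D.simples, ∃ d : E → ℕ, μ = ∑ δ ∈ D.Delta, (d δ : ℝ) • δ :=
    fun μ hμ => D.pos_nsum_delta (D.simples_subset hμ)
  choose! d hd using hall
  have e : ∑ δ ∈ D.Delta, ((∑ μ ∈ D.simples, c μ * d μ δ : ℕ) : ℝ) • δ = δ₀ := by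
    have step1 : ∀ δ : E, ((∑ μ ∈ D.simples, c μ * d μ δ : ℕ) : ℝ) • δ
        = ∑ μ ∈ D.simples, ((c μ : ℝ) * (d μ δ : ℝ)) • δ := by
      intro δ
      push_cast
      rw [Finset.sum_smul]
    calc ∑ δ ∈ D.Delta, ((∑ μ ∈ D.simples, c μ * d μ δ : ℕ) : ℝ) • δ
        = ∑ δ ∈ D.Delta, ∑ μ ∈ D.simples, ((c μ : ℝ) * (d μ δ : ℝ)) • δ :=
          Finset.sum_congr rfl fun δ _ => step1 δ
      _ = ∑ μ ∈ D.simples, ∑ δ ∈ D.Delta, ((c μ : ℝ) * (d μ δ : ℝ)) • δ := Finset.sum_comm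
      _ = ∑ μ ∈ D.simples, (c μ : ℝ) • ∑ δ ∈ D.Delta, (d μ δ : ℝ) • δ := by
          apply Finset.sum_congr rfl
          intro μ _
          rw [Finset.smul_sum]
          apply Finset.sum_congr rfl
          intro δ _
          rw [smul_smul]
      _ = ∑ μ ∈ D.simples, (c μ : ℝ) • μ := by
          apply Finset.sum_congr rfl
          intro μ hμ
          rw [← hd μ hμ]
      _ = δ₀ := hc.symm
  have e0 : ∑ δ ∈ D.Delta, (if δ = δ₀ then (1:ℝ) else 0) • δ = δ₀ := by
    simp [ite_smul, Finset.sum_ite_eq', hδ₀]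
  have huniq := D.delta_coeff_unique _ _ (e.trans e0.symm)
  have hA0 : ∑ μ ∈ D.simples, c μ * d μ δ₀ = 1 := by
    have h1 := huniq δ₀ hδ₀
    rw [if_pos rfl] at h1
    exact_mod_cast h1
  have hAz : ∀ δ ∈ D.Delta, δ ≠ δ₀ → ∑ μ ∈ D.simples, c μ * d μ δ = 0 := by
    intro δ hδ hne
    have h1 := huniq δ hδ
    rw [if_neg hne] at h1
    exact_mod_cast h1
  have hex : ∃ μ₀ ∈ D.simples, 1 ≤ c μ₀ * d μ₀ δ₀ := by
    by_contra hno
    push_neg at hno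
    have : ∑ μ ∈ D.simples, c μ * d μ δ₀ = 0 := Finset.sum_eq_zero (fun μ hμ => by
      have := hno μ hμ
      omega)
    omega
  obtain ⟨μ₀, hμ₀, hge⟩ := hex
  have hc₀ : 1 ≤ c μ₀ := by
    rcases Nat.eq_zero_or_pos (c μ₀) with h1 | h1
    · rw [h1, zero_mul] at hge; omega
    · exact h1
  have hdz : ∀ δ ∈ D.Delta, δ ≠ δ₀ → d μ₀ δ = 0 := by
    intro δ hδ hne
    have hz := hAz δ hδ hne
    have h2 : c μ₀ * d μ₀ δ = 0 := by
      have := (Finset.sum_eq_zero_iff).mp hz μ₀ hμ₀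
      exact this
    rcases Nat.mul_eq_zero.mp h2 with h3 | h3
    · omega
    · exact h3
  have hμeq : μ₀ = (d μ₀ δ₀ : ℝ) • δ₀ := by
    have h1 := hd μ₀ hμ₀
    rw [Finset.sum_eq_single_of_mem δ₀ hδ₀ (fun δ hδ hne => by
      rw [hdz δ hδ hne]; simp)] at h1
    exact h1
  have hμR : μ₀ ∈ D.R := D.rpos_subset (D.simples_subset hμ₀)
  have hred := D.reduced δ₀ (D.rpos_subset (D.Delta_subset hδ₀)) _ (by
    rw [← hμeq]; exact hμR)
  rcases hred with h1 | h1
  · rw [h1, one_smul] at hμeq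
    rw [← hμeq]
    exact hμ₀
  · exfalso
    have : (0:ℝ) ≤ (d μ₀ δ₀ : ℝ) := Nat.cast_nonneg _
    rw [h1] at this
    linarith


lemma rho_delta {δ : E} (hδ : δ ∈ D.Delta) : D.coroot δ D.rho = 1 :=
  D.rho_simple δ (D.Delta_subset_simples hδ)

lemma coroot_rho_int {β : E} (hβ : β ∈ D.R) : ∃ n : ℤ, D.coroot β D.rho = (n : ℝ) := by
  obtain ⟨n, hn⟩ := D.coroot_decomp hβ
  refine ⟨∑ δ ∈ D.Delta, n δ, ?_⟩
  rw [hn D.rho]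
  push_cast
  apply Finset.sum_congr rfl
  intro δ hδ
  rw [D.rho_delta hδ, mul_one]

lemma coroot_rho_bounds {β : E} (hβ : β ∈ D.Rpos) :
    1 ≤ D.coroot β D.rho ∧ D.coroot β D.rho ≤ (D.p : ℝ) - 1 := by
  have hβR := D.rpos_subset hβ
  obtain ⟨n, hn⟩ := D.coroot_rho_int hβR
  have hpos : 0 < D.coroot β D.rho :=
    (D.coroot_pos_iff hβR).mpr (D.bform_rho_pos hβ)
  have hlt : D.coroot β D.rho < (D.p : ℝ) := D.p_gt β hβ
  rw [hn] at hpos hlt ⊢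
  have h1 : 0 < n := by exact_mod_cast hpos
  have h2 : n < D.p := by exact_mod_cast hlt
  constructor
  · have h3 : 1 ≤ n := h1
    exact_mod_cast h3
  · have h3 : n ≤ D.p - 1 := by omega
    exact_mod_cast h3

lemma simples_eq_Delta : D.simples = D.Delta := by
  apply Finset.Subset.antisymm _ D.Delta_subset_simples
  intro μ hμ
  by_contra hnot
  have hμp : μ ∈ D.Rpos := D.simples_subset hμ
  have hμR : μ ∈ D.R := D.rpos_subset hμp
  obtain ⟨δ, hδ, hbf⟩ := D.exists_delta_pos_pairing hμp
  have hδR : δ ∈ D.R := D.rpos_subset (D.Delta_subset hδ)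
  have hne : μ ≠ δ := fun h => hnot (h ▸ hδ)
  have hγ : μ - D.coroot δ μ • δ ∈ D.Rpos := D.sdelta_pos hδ hμp hne
  have hrefl := D.coroot_reflect hδR μ D.rho
  have hγrho := (D.coroot_rho_bounds hγ).1
  rw [hrefl, D.rho_simple μ hμ, D.rho_delta hδ, one_mul] at hγrho
  have hk : 1 ≤ D.coroot μ δ :=
    D.coroot_ge_one hμR hδR (by rw [D.bform_comm]; exact hbf)
  linarith

lemma exists_lam (t : E → ℝ) : ∃ lam : E, ∀ μ ∈ D.simples, D.coroot μ lam = t μ := by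
  classical
  set ι := {x // x ∈ D.simples}
  let L1 : (ι → ℝ) →ₗ[ℝ] E := Fintype.linearCombination ℝ (fun ν : ι => (ν : E))
  let L2 : E →ₗ[ℝ] (ι → ℝ) := LinearMap.pi (fun μ : ι => D.bform (μ : E))
  have hL1 : ∀ x : ι → ℝ, L1 x = ∑ ν : ι, x ν • (ν : E) := fun x => by
    simp [L1, Fintype.linearCombination_apply]
  have hinj : Function.Injective (L2 ∘ₗ L1) := by
    rw [← LinearMap.ker_eq_bot, LinearMap.ker_eq_bot']
    intro x hx
    have hx' : ∀ μ : ι, D.bform (μ : E) (L1 x) = 0 := fun μ => congrFun hx μ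
    have hL1x : D.bform (L1 x) (L1 x) = 0 := by
      have e1 : D.bform (L1 x) = D.bform (∑ ν : ι, x ν • (ν : E)) := by rw [hL1]
      rw [e1]
      simp only [map_sum, map_smul, LinearMap.sum_apply, LinearMap.smul_apply, smul_eq_mul]
      apply Finset.sum_eq_zero
      intro ν _
      rw [hx' ν, mul_zero]
    have hz : L1 x = 0 := D.eq_zero_of_bform_self hL1x
    rw [hL1] at hz
    set x' : E → ℝ := fun δ => if h : δ ∈ D.simples then x ⟨δ, h⟩ else 0 with hx'def
    have hsum : ∑ δ ∈ D.Delta, x' δ • δ = 0 := by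
      rw [← D.simples_eq_Delta, ← Finset.sum_attach D.simples (fun δ => x' δ • δ)]
      rw [← hz]
      rw [show (Finset.univ : Finset ι) = D.simples.attach from rfl]
      apply Finset.sum_congr rfl
      intro ν _
      congr 1
      rw [hx'def]
      simp only
      rw [dif_pos ν.2]
    have hvan := D.delta_indep x' hsum
    funext ν
    have := hvan (ν : E) (by rw [← D.simples_eq_Delta]; exact ν.2)
    rw [hx'def] at this
    simp only at this
    rw [dif_pos ν.2] at this
    exact this
  have hsurj : Function.Surjective (L2 ∘ₗ L1) :=
    LinearMap.injective_iff_surjective.mp hinj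
  obtain ⟨x, hx⟩ := hsurj (fun μ : ι => t (μ : E) * D.bform (μ : E) (μ : E) / 2)
  refine ⟨L1 x, ?_⟩
  intro μ hμ
  have hμR : μ ∈ D.R := D.rpos_subset (D.simples_subset hμ)
  have hBμ : 0 < D.bform μ μ := D.bform_root_pos hμR
  have h1 := D.coroot_mul_bform hμR (L1 x)
  have h2 : D.bform μ (L1 x) = t μ * D.bform μ μ / 2 := congrFun hx ⟨μ, hμ⟩
  rw [D.bform_comm (L1 x) μ, h2] at h1
  have := mul_right_cancel₀ (ne_of_gt hBμ) (h1.trans (by ring) :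
    D.coroot μ (L1 x) * D.bform μ μ = t μ * D.bform μ μ)
  exact this

lemma isWeight_of_int_on_simples {lam : E}
    (h : ∀ μ ∈ D.simples, ∃ m : ℤ, D.coroot μ lam = (m : ℝ)) : D.IsWeight lam := by
  intro β hβ
  obtain ⟨n, hn⟩ := D.coroot_decomp hβ
  choose! m hm using h
  refine ⟨∑ δ ∈ D.Delta, n δ * m δ, ?_⟩
  rw [hn lam]
  push_cast
  apply Finset.sum_congr rfl
  intro δ hδ
  rw [hm δ (D.Delta_subset_simples hδ)]


lemma coroot_apply_v_rho {v : E ≃ₗ[ℝ] E} (hv : v ∈ D.W) (μ : E) :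
    D.coroot μ (v D.rho) = D.coroot (v.symm μ) D.rho := by
  have h := D.W_equivariant v hv (v.symm μ) D.rho
  rwa [v.apply_symm_apply] at h

lemma symm_mem_R {v : E ≃ₗ[ℝ] E} (hv : v ∈ D.W) {μ : E} (hμ : μ ∈ D.R) :
    v.symm μ ∈ D.R :=
  D.W_root_stable v⁻¹ (inv_mem hv) μ hμ

lemma coroot_dotZero {v : E ≃ₗ[ℝ] E} (lam μ : E) :
    D.coroot μ (D.dotZero v lam) =
      D.coroot μ (v D.rho) - D.coroot μ D.rho + (D.p : ℝ) * D.coroot μ lam := by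
  rw [dotZero, map_add, map_sub, map_smul, smul_eq_mul]

lemma exists_InW0 {v : E ≃ₗ[ℝ] E} (hv : v ∈ D.W) : ∃ lam : E, D.InW0 v lam := by
  classical
  obtain ⟨lam, hlam⟩ := D.exists_lam (fun μ => if v.symm μ ∈ D.Rpos then 0 else 1)
  have hbounds : ∀ μ ∈ D.simples, 0 ≤ D.coroot μ (D.dotZero v lam) ∧
      D.coroot μ (D.dotZero v lam) ≤ (D.p : ℝ) - 1 := by
    intro μ hμ
    have hμR : μ ∈ D.R := D.rpos_subset (D.simples_subset hμ)
    have hβR : v.symm μ ∈ D.R := D.symm_mem_R hv hμR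
    have hp1 : (1:ℝ) ≤ (D.p : ℝ) := by exact_mod_cast D.p_pos
    rw [D.coroot_dotZero lam μ, D.coroot_apply_v_rho hv μ, D.rho_simple μ hμ,
      hlam μ hμ]
    by_cases hpos : v.symm μ ∈ D.Rpos
    · rw [if_pos hpos, mul_zero]
      have := D.coroot_rho_bounds hpos
      constructor <;> linarith [this.1, this.2]
    · rw [if_neg hpos, mul_one]
      have hneg : -(v.symm μ) ∈ D.Rpos := by
        have := D.pos_iff _ hβR; tauto
      have hb := D.coroot_rho_bounds hneg
      have hcn : D.coroot (-(v.symm μ)) D.rho = - D.coroot (v.symm μ) D.rho :=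
        D.coroot_neg_root hβR D.rho
      rw [hcn] at hb
      constructor <;> linarith [hb.1, hb.2]
  refine ⟨lam, hv, ?_, fun μ hμ => (hbounds μ hμ).1, fun μ hμ => (hbounds μ hμ).2⟩
  apply D.isWeight_of_int_on_simples
  intro μ hμ
  refine ⟨if v.symm μ ∈ D.Rpos then 0 else 1, ?_⟩
  rw [hlam μ hμ]
  by_cases hpos : v.symm μ ∈ D.Rpos <;> simp [hpos]

lemma uniq_InW0 {v : E ≃ₗ[ℝ] E} {lam lam' : E}
    (h : D.InW0 v lam) (h' : D.InW0 v lam') : lam = lam' := by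
  obtain ⟨_, hw, hdom, hres⟩ := h
  obtain ⟨_, hw', hdom', hres'⟩ := h'
  have hzero : ∀ μ ∈ D.simples, D.coroot μ lam = D.coroot μ lam' := by
    intro μ hμ
    have hμR : μ ∈ D.R := D.rpos_subset (D.simples_subset hμ)
    obtain ⟨m, hm⟩ := hw μ hμR
    obtain ⟨m', hm'⟩ := hw' μ hμR
    have e1 := D.coroot_dotZero (v := v) lam μ
    have e2 := D.coroot_dotZero (v := v) lam' μ
    have b1 := hdom μ hμ
    have b2 := hres μ hμ
    have b3 := hdom' μ hμ
    have b4 := hres' μ hμ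
    rw [e1, hm] at b1 b2
    rw [e2, hm'] at b3 b4
    have hub : (D.p : ℝ) * ((m : ℝ) - (m' : ℝ)) ≤ (D.p : ℝ) - 1 := by linarith
    have hlb : -((D.p : ℝ) - 1) ≤ (D.p : ℝ) * ((m : ℝ) - (m' : ℝ)) := by linarith
    have hub' : D.p * (m - m') ≤ D.p - 1 := by exact_mod_cast hub
    have hlb' : -(D.p - 1) ≤ D.p * (m - m') := by exact_mod_cast hlb
    have hpp := D.p_pos
    have hmm : m = m' := by nlinarith [hub', hlb', hpp]
    rw [hm, hm', hmm]
  have hzeroR : ∀ β ∈ D.R, D.coroot β (lam - lam') = 0 := by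
    intro β hβ
    obtain ⟨n, hn⟩ := D.coroot_decomp hβ
    rw [map_sub, hn lam, hn lam', ← Finset.sum_sub_distrib]
    apply Finset.sum_eq_zero
    intro δ hδ
    rw [hzero δ (D.Delta_subset_simples hδ)]
    ring
  have := D.nondeg _ hzeroR
  rw [sub_eq_zero] at this
  exact this

lemma W_finite : (D.W : Set (E ≃ₗ[ℝ] E)).Finite := by
  classical
  rw [← Set.finite_coe_iff]
  apply Finite.of_injective (fun v : ↥(D.W : Set (E ≃ₗ[ℝ] E)) =>
    fun α : ↥D.R => (⟨v.1 α.1, D.W_root_stable v.1 v.2 α.1 α.2⟩ : ↥D.R))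
  intro v w h
  apply Subtype.ext
  have hR : ∀ α ∈ D.R, v.1 α = w.1 α := by
    intro α hα
    have := congrFun h ⟨α, hα⟩
    exact congrArg Subtype.val this
  apply LinearEquiv.toLinearMap_injective
  apply LinearMap.ext_on D.span_eq
  intro x hx
  exact hR x (Finset.mem_coe.mp hx)

end RootSystemData

/-- The set `W⁰ = {w ∈ W'_aff : w • 0 is restricted and dominant}` is
finite, and the map `W⁰ → W` sending an element `t_lam · v` (here encoded as the pair
`(v, lam)` with `v ∈ W`, `lam ∈ X`) to its finite Weyl group component `v` is a
bijection onto `W`. -/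
theorem statement1 {E : Type} [AddCommGroup E] [Module ℝ E] [DecidableEq E]
    (D : RootSystemData E) :
    {q : (E ≃ₗ[ℝ] E) × E | D.InW0 q.1 q.2}.Finite ∧
      Set.BijOn (fun q : (E ≃ₗ[ℝ] E) × E => q.1)
        {q : (E ≃ₗ[ℝ] E) × E | D.InW0 q.1 q.2} (D.W : Set (E ≃ₗ[ℝ] E)) := by
  have hmaps : Set.MapsTo (fun q : (E ≃ₗ[ℝ] E) × E => q.1)
      {q : (E ≃ₗ[ℝ] E) × E | D.InW0 q.1 q.2} (D.W : Set (E ≃ₗ[ℝ] E)) :=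
    fun q hq => hq.1
  have hinj : Set.InjOn (fun q : (E ≃ₗ[ℝ] E) × E => q.1)
      {q : (E ≃ₗ[ℝ] E) × E | D.InW0 q.1 q.2} := by
    intro q1 h1 q2 h2 heq
    simp only [Set.mem_setOf_eq] at h1 h2
    have hv : q1.1 = q2.1 := heq
    have h1' : D.InW0 q2.1 q1.2 := hv ▸ h1
    have hlam : q1.2 = q2.2 := D.uniq_InW0 h1' h2
    exact Prod.ext hv hlam
  have hsurj : Set.SurjOn (fun q : (E ≃ₗ[ℝ] E) × E => q.1)
      {q : (E ≃ₗ[ℝ] E) × E | D.InW0 q.1 q.2} (D.W : Set (E ≃ₗ[ℝ] E)) := by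
    intro v hv
    obtain ⟨lam, hlam⟩ := D.exists_InW0 hv
    exact ⟨(v, lam), hlam, rfl⟩
  refine ⟨?_, hmaps, hinj, hsurj⟩
  apply Set.Finite.of_finite_image _ hinj
  apply Set.Finite.subset D.W_finite
  rintro y ⟨q, hq, rfl⟩
  exact hq.1
end

section
/- For every w ∈ W⁰ one has ℓ(τ₀·w) = ℓ(τ₀) − ℓ(w). -/
set_option linter.unusedSectionVars false
set_option maxHeartbeats 1000000


section Aux
variable {E : Type} [AddCommGroup E] [Module ℝ E]

/-- A positive definite bilinear form on a f.d. real vector space. -/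
noncomputable def auxB0 [FiniteDimensional ℝ E] : E →ₗ[ℝ] E →ₗ[ℝ] ℝ :=
  ∑ i, ((Module.finBasis ℝ E).coord i).smulRight ((Module.finBasis ℝ E).coord i)

lemma auxB0_apply [FiniteDimensional ℝ E] (x y : E) :
    auxB0 x y = ∑ i, (Module.finBasis ℝ E).coord i x * (Module.finBasis ℝ E).coord i y := by
  simp [auxB0, LinearMap.sum_apply, LinearMap.smulRight_apply, smul_eq_mul]

lemma auxB0_pos [FiniteDimensional ℝ E] {x : E} (hx : x ≠ 0) : 0 < auxB0 x x := by
  rw [auxB0_apply]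
  have hne : ∃ i, (Module.finBasis ℝ E).coord i x ≠ 0 := by
    by_contra hc
    push_neg at hc
    apply hx
    have := Module.Basis.sum_repr (Module.finBasis ℝ E) x
    rw [← this]
    refine Finset.sum_eq_zero fun i _ => ?_
    have : (Module.finBasis ℝ E).coord i x = 0 := hc i
    simp [Module.Basis.coord_apply] at this
    simp [this]
  obtain ⟨i, hi⟩ := hne
  refine Finset.sum_pos' (fun j _ => mul_self_nonneg _) ⟨i, Finset.mem_univ i, ?_⟩
  exact mul_self_pos.mpr hi

end Aux

namespace RootSystemData

variable {E : Type} [AddCommGroup E] [Module ℝ E] [DecidableEq E] (D : RootSystemData E)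

lemma finiteW : Finite ↥D.W := by
  have : Finite ↥(D.R : Set E) := inferInstance
  refine Finite.of_injective (fun w => (fun α : ↥(D.R : Set E) =>
    (⟨(w : E ≃ₗ[ℝ] E) α, D.W_root_stable w w.2 α α.2⟩ : ↥(D.R : Set E)))) ?_
  intro w₁ w₂ hw
  have h : ∀ α ∈ (D.R : Set E), (w₁ : E ≃ₗ[ℝ] E) α = (w₂ : E ≃ₗ[ℝ] E) α := by
    intro α hα
    have := congrFun hw ⟨α, hα⟩
    exact Subtype.ext_iff.mp this
  have : ((w₁ : E ≃ₗ[ℝ] E) : E →ₗ[ℝ] E) = ((w₂ : E ≃ₗ[ℝ] E) : E →ₗ[ℝ] E) :=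
    LinearMap.ext_on D.span_eq h
  ext x
  exact congrArg (fun f => f x) this

noncomputable def Wfin : Fintype ↥D.W := @Fintype.ofFinite _ (finiteW D)

/-- The averaged `W`-invariant positive definite bilinear form. -/
noncomputable def BB : E →ₗ[ℝ] E →ₗ[ℝ] ℝ :=
  haveI := D.finiteDim
  letI := Wfin D
  ∑ w : ↥D.W, ((auxB0.comp (w : E ≃ₗ[ℝ] E).toLinearMap).compl₂ (w : E ≃ₗ[ℝ] E).toLinearMap)

lemma BB_apply (x y : E) : D.BB x y =
    haveI := D.finiteDim
    letI := Wfin D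
    ∑ w : ↥D.W, auxB0 ((w : E ≃ₗ[ℝ] E) x) ((w : E ≃ₗ[ℝ] E) y) := by
  haveI := D.finiteDim
  letI := Wfin D
  simp [BB, LinearMap.sum_apply]

lemma BB_pos {x : E} (hx : x ≠ 0) : 0 < D.BB x x := by
  haveI := D.finiteDim
  letI := Wfin D
  rw [BB_apply]
  refine Finset.sum_pos (fun w _ => auxB0_pos ?_) Finset.univ_nonempty
  simp [hx]

lemma BB_inv {u : E ≃ₗ[ℝ] E} (hu : u ∈ D.W) (x y : E) : D.BB (u x) (u y) = D.BB x y := by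
  haveI := D.finiteDim
  letI := Wfin D
  rw [BB_apply, BB_apply]
  exact Fintype.sum_equiv (Equiv.mulRight (⟨u, hu⟩ : ↥D.W))
    (fun w => auxB0 ((w : E ≃ₗ[ℝ] E) (u x)) ((w : E ≃ₗ[ℝ] E) (u y)))
    (fun w => auxB0 ((w : E ≃ₗ[ℝ] E) x) ((w : E ≃ₗ[ℝ] E) y)) (fun w => rfl)

end RootSystemData


namespace RootSystemData

variable {E : Type} [AddCommGroup E] [Module ℝ E] [DecidableEq E] (D : RootSystemData E)

/-- The reflection attached to a root, as a linear automorphism. -/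
noncomputable def refl {α : E} (hα : α ∈ D.R) : E ≃ₗ[ℝ] E :=
  LinearEquiv.ofLinear (LinearMap.id - (D.coroot α).smulRight α)
    (LinearMap.id - (D.coroot α).smulRight α)
    (by
      ext x
      have h2 := D.coroot_self α hα
      simp [LinearMap.smulRight_apply, map_sub, map_smul, h2, smul_smul]
      module)
    (by
      ext x
      have h2 := D.coroot_self α hα
      simp [LinearMap.smulRight_apply, map_sub, map_smul, h2, smul_smul]
      module)

lemma refl_apply {α : E} (hα : α ∈ D.R) (x : E) :
    D.refl hα x = x - D.coroot α x • α := rfl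

lemma refl_mem {α : E} (hα : α ∈ D.R) : D.refl hα ∈ D.W := by
  rw [D.W_gen]
  exact Subgroup.subset_closure ⟨α, hα, fun x => rfl⟩

lemma coroot_eq {α : E} (hα : α ∈ D.R) (x : E) :
    D.coroot α x * D.BB α α = 2 * D.BB x α := by
  have hs := D.BB_inv (D.refl_mem hα) x α
  rw [refl_apply, refl_apply, D.coroot_self α hα] at hs
  have hαα : α - (2:ℝ) • α = -α := by module
  rw [hαα] at hs
  simp only [map_sub, map_smul, map_neg, LinearMap.sub_apply, LinearMap.smul_apply,
    LinearMap.neg_apply, smul_eq_mul] at hs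
  linarith

lemma BB_self_pos {α : E} (hα : α ∈ D.R) : 0 < D.BB α α :=
  D.BB_pos (fun h => D.zero_not_mem (h ▸ hα))

lemma coroot_neg {α : E} (hα : α ∈ D.R) (x : E) :
    D.coroot (-α) x = -(D.coroot α x) := by
  have h1 := D.coroot_eq (D.neg_mem α hα) x
  have h2 := D.coroot_eq hα x
  have h3 : D.BB (-α) (-α) = D.BB α α := by simp
  have h4 : D.BB x (-α) = -(D.BB x α) := by simp
  rw [h3, h4] at h1
  have := D.BB_self_pos hα
  nlinarith

/-- Integrality of `⟨ρ, α∨⟩`. -/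
lemma rho_int {α : E} (hα : α ∈ D.R) : ∃ k : ℤ, D.coroot α D.rho = (k : ℝ) := by
  classical
  have hα0 : α ≠ 0 := fun h => D.zero_not_mem (h ▸ hα)
  have hc : ∀ β ∈ D.R, ∃ n : ℤ, D.coroot α β = (n : ℝ) := D.crystallographic α hα
  choose! f hf using hc
  have h2 : 2 * D.coroot α D.rho = ((∑ β ∈ D.Rpos, f β : ℤ) : ℝ) := by
    have := congrArg (D.coroot α) D.rho_def
    rw [map_smul, map_sum] at this
    push_cast
    rw [smul_eq_mul] at this
    rw [this]
    exact Finset.sum_congr rfl fun β hβ => hf β (D.rpos_subset hβ)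
  have hval : ∀ β ∈ D.R, D.coroot α (β - D.coroot α β • α) = -(D.coroot α β) := by
    intro β hβ
    rw [map_sub, map_smul, D.coroot_self α hα]
    simp; ring
  have hsR : ∀ β ∈ D.R, β - D.coroot α β • α ∈ D.R := fun β hβ => D.reflection_mem α hα β hβ
  -- the sum is even
  have heven : ((∑ β ∈ D.Rpos, f β : ℤ) : ZMod 2) = 0 := by
    push_cast
    refine Finset.sum_involution
      (fun β hβ => if β - D.coroot α β • α ∈ D.Rpos then β - D.coroot α β • α
        else -(β - D.coroot α β • α)) ?_ ?_ ?_ ?_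
    · intro β hβ
      have hβR := D.rpos_subset hβ
      by_cases hpos : β - D.coroot α β • α ∈ D.Rpos
      · simp only [hpos, if_pos]
        have : (f (β - D.coroot α β • α) : ℝ) = -(f β : ℝ) := by
          rw [← hf _ (hsR β hβR), hval β hβR, hf β hβR]
        have hint : f (β - D.coroot α β • α) = -(f β) := by exact_mod_cast this
        rw [hint]
        push_cast
        ring
      · simp only [hpos, if_neg, not_false_iff]
        have : (f (-(β - D.coroot α β • α)) : ℝ) = (f β : ℝ) := by
          rw [← hf _ (D.neg_mem _ (hsR β hβR)), map_neg, hval β hβR, hf β hβR]; ring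
        have hint : f (-(β - D.coroot α β • α)) = f β := by exact_mod_cast this
        rw [hint]
        exact CharTwo.add_self_eq_zero _
    · -- fixed points have value 0
      intro β hβ hfβ
      have hβR := D.rpos_subset hβ
      intro heq
      apply hfβ
      by_cases hpos : β - D.coroot α β • α ∈ D.Rpos
      · simp only [hpos, if_pos] at heq
        have hz : D.coroot α β • α = 0 := by
          linear_combination (norm := module) -heq
        have hc0 : D.coroot α β = 0 := by
          rcases smul_eq_zero.mp hz with h | h
          · exact h
          · exact absurd h hα0
        have : (f β : ℝ) = 0 := by rw [← hf β hβR, hc0]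
        have : f β = 0 := by exact_mod_cast this
        simp [this]
      · simp only [hpos, if_neg, not_false_iff] at heq
        have h2β : (2:ℝ) • β = D.coroot α β • α := by
          linear_combination (norm := module) -heq
        have hβ2 : (D.coroot α β / 2) • α = β := by
          rw [div_eq_mul_inv, mul_comm, mul_smul, ← h2β, smul_smul]
          norm_num
        have hmem : (D.coroot α β / 2) • α ∈ D.R := by rw [hβ2]; exact hβR
        have hred := D.reduced α hα (D.coroot α β / 2) hmem
        have hc : D.coroot α β = 2 ∨ D.coroot α β = -2 := by
          rcases hred with h | h
          · left; field_simp at h; linarith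
          · right; field_simp at h; linarith
        have : f β = 2 ∨ f β = -2 := by
          rcases hc with h | h
          · left
            have : (f β : ℝ) = 2 := by rw [← hf β hβR]; exact h
            exact_mod_cast this
          · right
            have : (f β : ℝ) = -2 := by rw [← hf β hβR]; exact h
            exact_mod_cast this
        rcases this with h | h <;> rw [h] <;> decide
    · -- g maps into Rpos
      intro β hβ
      have hβR := D.rpos_subset hβ
      by_cases hpos : β - D.coroot α β • α ∈ D.Rpos
      · simpa [hpos]
      · simp only [hpos, if_neg, not_false_iff]
        by_contra hneg
        exact hpos ((D.pos_iff _ (hsR β hβR)).mpr hneg)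
    · -- g is an involution
      intro β hβ
      have hβR := D.rpos_subset hβ
      by_cases hpos : β - D.coroot α β • α ∈ D.Rpos
      · simp only [hpos, if_pos]
        have harg : (β - D.coroot α β • α) - D.coroot α (β - D.coroot α β • α) • α = β := by
          rw [hval β hβR]
          module
        simp only [harg, hβ, if_pos]
      · simp only [hpos, if_neg, not_false_iff]
        have harg : -(β - D.coroot α β • α) - D.coroot α (-(β - D.coroot α β • α)) • α
            = -β := by
          rw [map_neg, hval β hβR]
          module
        have hnβ : -β ∉ D.Rpos := (D.pos_iff β hβR).mp hβ
        simp only [harg, hnβ, if_neg, not_false_iff, neg_neg]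
  obtain ⟨k, hk⟩ := (ZMod.intCast_zmod_eq_zero_iff_dvd _ 2).mp heven
  refine ⟨k, ?_⟩
  rw [hk] at h2
  push_cast at h2
  linarith

lemma star_eq {α : E} (hα : α ∈ D.Rpos) {c : E → ℕ} (hc : α = ∑ β ∈ D.simples, (c β : ℝ) • β)
    (z : E) : D.coroot α z * D.BB α α
      = ∑ β ∈ D.simples, (c β : ℝ) * (D.coroot β z * D.BB β β) := by
  have h1 := D.coroot_eq (D.rpos_subset hα) z
  rw [h1]
  have h2 : D.BB z α = ∑ β ∈ D.simples, (c β : ℝ) * D.BB z β := by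
    conv_lhs => rw [hc]
    rw [map_sum]
    exact Finset.sum_congr rfl fun β hβ => by rw [map_smul, smul_eq_mul]
  rw [h2, Finset.mul_sum]
  refine Finset.sum_congr rfl fun β hβ => ?_
  have := D.coroot_eq (D.rpos_subset (D.simples_subset hβ)) z
  ring_nf
  ring_nf at this
  nlinarith [this]

lemma rho_pos {α : E} (hα : α ∈ D.Rpos) : 0 < D.coroot α D.rho := by
  obtain ⟨c, hc⟩ := D.pos_sum_simples α hα
  have hstar := D.star_eq hα hc D.rho
  have hterm : ∀ β ∈ D.simples, (c β : ℝ) * (D.coroot β D.rho * D.BB β β)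
      = (c β : ℝ) * D.BB β β := by
    intro β hβ
    rw [D.rho_simple β hβ]; ring
  rw [Finset.sum_congr rfl hterm] at hstar
  have hpos : 0 < ∑ β ∈ D.simples, (c β : ℝ) * D.BB β β := by
    have hnn : ∀ β ∈ D.simples, 0 ≤ (c β : ℝ) * D.BB β β := fun β hβ =>
      mul_nonneg (Nat.cast_nonneg _)
        (le_of_lt (D.BB_self_pos (D.rpos_subset (D.simples_subset hβ))))
    rcases (Finset.sum_nonneg hnn).lt_or_eq with h | h
    · exact h
    · exfalso
      have hall := (Finset.sum_eq_zero_iff_of_nonneg hnn).mp h.symm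
      have hc0 : ∀ β ∈ D.simples, (c β : ℝ) = 0 := by
        intro β hβ
        have := hall β hβ
        have hBB := D.BB_self_pos (D.rpos_subset (D.simples_subset hβ))
        rcases mul_eq_zero.mp this with h' | h'
        · exact h'
        · exact absurd h' (ne_of_gt hBB)
      have : α = 0 := by
        rw [hc]
        exact Finset.sum_eq_zero fun β hβ => by rw [hc0 β hβ, zero_smul]
      exact D.zero_not_mem (this ▸ D.rpos_subset hα)
  have hBB := D.BB_self_pos (D.rpos_subset hα)
  by_contra hle
  push_neg at hle
  nlinarith

/-- Bounds on `⟨z, α∨⟩` for a positive root, given bounds at simple roots. -/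
lemma coroot_bound {α : E} (hα : α ∈ D.Rpos) {z : E} {m M : ℝ}
    (h1 : ∀ β ∈ D.simples, m ≤ D.coroot β z) (h2 : ∀ β ∈ D.simples, D.coroot β z ≤ M) :
    m * D.coroot α D.rho ≤ D.coroot α z ∧ D.coroot α z ≤ M * D.coroot α D.rho := by
  obtain ⟨c, hc⟩ := D.pos_sum_simples α hα
  have hz := D.star_eq hα hc z
  have hr := D.star_eq hα hc D.rho
  have hterm : ∀ β ∈ D.simples, (c β : ℝ) * (D.coroot β D.rho * D.BB β β)
      = (c β : ℝ) * D.BB β β := fun β hβ => by rw [D.rho_simple β hβ]; ring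
  rw [Finset.sum_congr rfl hterm] at hr
  have hBBα := D.BB_self_pos (D.rpos_subset hα)
  have hnn : ∀ β ∈ D.simples, (0:ℝ) ≤ (c β : ℝ) * D.BB β β := fun β hβ =>
    mul_nonneg (Nat.cast_nonneg _)
      (le_of_lt (D.BB_self_pos (D.rpos_subset (D.simples_subset hβ))))
  constructor
  · have hle : ∑ β ∈ D.simples, m * ((c β : ℝ) * D.BB β β)
        ≤ ∑ β ∈ D.simples, (c β : ℝ) * (D.coroot β z * D.BB β β) := by
      refine Finset.sum_le_sum fun β hβ => ?_
      have := mul_le_mul_of_nonneg_right (h1 β hβ) (hnn β hβ)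
      nlinarith [this]
    rw [← Finset.mul_sum, ← hr, ← hz] at hle
    nlinarith
  · have hle : ∑ β ∈ D.simples, (c β : ℝ) * (D.coroot β z * D.BB β β)
        ≤ ∑ β ∈ D.simples, M * ((c β : ℝ) * D.BB β β) := by
      refine Finset.sum_le_sum fun β hβ => ?_
      have := mul_le_mul_of_nonneg_right (h2 β hβ) (hnn β hβ)
      nlinarith [this]
    rw [← Finset.mul_sum, ← hr, ← hz] at hle
    nlinarith


lemma w0_symm_apply (x : E) : D.w0.symm x = D.w0 x := by
  rw [LinearEquiv.symm_apply_eq]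
  exact (congrArg (fun f : E ≃ₗ[ℝ] E => f x) D.w0_sq).symm ▸ rfl

lemma w0_rho : D.w0 D.rho = -D.rho := by
  have h1 : (2:ℝ) • D.w0 D.rho = ∑ α ∈ D.Rpos, D.w0 α := by
    rw [← map_smul, D.rho_def, map_sum]
  have h2 : ∑ α ∈ D.Rpos, D.w0 α = -∑ α ∈ D.Rpos, α := by
    rw [← Finset.sum_neg_distrib]
    refine Finset.sum_nbij' (fun α => -(D.w0 α)) (fun β => -(D.w0 β)) ?_ ?_ ?_ ?_ ?_
    · exact fun α hα => D.w0_neg α hα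
    · exact fun β hβ => D.w0_neg β hβ
    · intro α hα
      show -(D.w0 (-(D.w0 α))) = α
      rw [map_neg, neg_neg]
      exact congrArg (fun f : E ≃ₗ[ℝ] E => f α) D.w0_sq
    · intro β hβ
      show -(D.w0 (-(D.w0 β))) = β
      rw [map_neg, neg_neg]
      exact congrArg (fun f : E ≃ₗ[ℝ] E => f β) D.w0_sq
    · intro α hα
      rw [neg_neg]
  rw [h2, ← D.rho_def] at h1
  have : (2:ℝ) • D.w0 D.rho = (2:ℝ) • (-D.rho) := by rw [h1, smul_neg]
  exact smul_right_injective E (two_ne_zero) this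

lemma sum_perm {v : E ≃ₗ[ℝ] E} (hv : v ∈ D.W) (h : E → ℝ) :
    ∑ α ∈ D.Rpos, h (if v α ∈ D.Rpos then v α else -(v α)) = ∑ α ∈ D.Rpos, h α := by
  classical
  have hvinv : v.symm ∈ D.W := by
    have : v⁻¹ ∈ D.W := D.W.inv_mem hv
    exact this
  have hmemR : ∀ α ∈ D.Rpos, v α ∈ D.R := fun α hα =>
    D.W_root_stable v hv α (D.rpos_subset hα)
  have hmemRinv : ∀ α ∈ D.Rpos, v.symm α ∈ D.R := fun α hα =>
    D.W_root_stable v.symm hvinv α (D.rpos_subset hα)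
  refine Finset.sum_nbij' (fun α => if v α ∈ D.Rpos then v α else -(v α))
    (fun β => if v.symm β ∈ D.Rpos then v.symm β else -(v.symm β)) ?_ ?_ ?_ ?_ ?_
  · intro α hα
    by_cases hp : v α ∈ D.Rpos
    · simpa [hp]
    · simp only [hp, if_neg, not_false_iff]
      by_contra hneg
      exact hp ((D.pos_iff _ (hmemR α hα)).mpr hneg)
  · intro β hβ
    by_cases hp : v.symm β ∈ D.Rpos
    · simpa [hp]
    · simp only [hp, if_neg, not_false_iff]
      by_contra hneg
      exact hp ((D.pos_iff _ (hmemRinv β hβ)).mpr hneg)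
  · intro α hα
    by_cases hp : v α ∈ D.Rpos
    · simp [hp, hα]
    · simp only [hp, if_neg, not_false_iff, map_neg, LinearEquiv.symm_apply_apply]
      have : -(-α) ∈ D.Rpos := by rwa [neg_neg]
      have hna : -α ∉ D.Rpos := (D.pos_iff α (D.rpos_subset hα)).mp hα
      simp [hna]
  · intro β hβ
    by_cases hp : v.symm β ∈ D.Rpos
    · simp [hp, hβ]
    · simp only [hp, if_neg, not_false_iff, map_neg, LinearEquiv.apply_symm_apply]
      have hna : -β ∉ D.Rpos := (D.pos_iff β (D.rpos_subset hβ)).mp hβ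
      simp [hna]
  · intro α hα
    rfl


section Key

variable {v : E ≃ₗ[ℝ] E} {lam : E}

lemma simple_bounds (hdom : D.IsDominant (D.dotZero v lam))
    (hres : D.IsRestricted (D.dotZero v lam)) :
    ∀ β ∈ D.simples, 1 ≤ D.coroot β (v D.rho + (D.p : ℝ) • lam) ∧
      D.coroot β (v D.rho + (D.p : ℝ) • lam) ≤ (D.p : ℝ) := by
  intro β hβ
  have hd := hdom β hβ
  have hr := hres β hβ
  have hzd : v D.rho + (D.p : ℝ) • lam = D.dotZero v lam + D.rho := by
    simp only [dotZero]; module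
  have hc : D.coroot β (v D.rho + (D.p : ℝ) • lam) = D.coroot β (D.dotZero v lam) + 1 := by
    rw [hzd, map_add, D.rho_simple β hβ]
  constructor <;> (rw [hc]) <;> linarith

lemma coroot_z (hvW : v ∈ D.W) {α : E} (hα : α ∈ D.Rpos) :
    D.coroot (v α) (v D.rho + (D.p : ℝ) • lam)
      = D.coroot α D.rho + (D.p : ℝ) * D.coroot (v α) lam := by
  rw [map_add, map_smul, smul_eq_mul]
  congr 1
  exact D.W_equivariant v hvW α D.rho

lemma key_pos (hvW : v ∈ D.W) (hlam : D.IsWeight lam)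
    (hdom : D.IsDominant (D.dotZero v lam)) (hres : D.IsRestricted (D.dotZero v lam))
    {α : E} (hα : α ∈ D.Rpos) (hvp : v α ∈ D.Rpos) :
    0 ≤ D.coroot (v α) lam ∧ D.coroot (v α) lam ≤ D.coroot (v α) D.rho - 1 := by
  have hαR := D.rpos_subset hα
  have hvαR := D.W_root_stable v hvW α hαR
  obtain ⟨n, hn⟩ := hlam (v α) hvαR
  obtain ⟨a, ha⟩ := D.rho_int hαR
  obtain ⟨A, hA⟩ := D.rho_int hvαR
  have hapos : (0:ℝ) < a := ha ▸ D.rho_pos hα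
  have halt : (a:ℝ) < D.p := ha ▸ D.p_gt α hα
  have hApos : (0:ℝ) < A := hA ▸ D.rho_pos hvp
  have hppos : (0:ℝ) < D.p := by exact_mod_cast D.p_pos
  have hsb := D.simple_bounds hdom hres
  have hb := D.coroot_bound hvp (fun β hβ => (hsb β hβ).1) (fun β hβ => (hsb β hβ).2)
  rw [D.coroot_z hvW hα, hn, ha, hA, one_mul] at hb
  obtain ⟨hb1, hb2⟩ := hb
  have h1 : (-1:ℝ) < (n:ℝ) := by nlinarith
  have h2 : (n:ℝ) < (A:ℝ) := by nlinarith
  have hn0 : (0:ℤ) ≤ n := by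
    have : (-1:ℤ) < n := by exact_mod_cast h1
    omega
  have hnA : n ≤ A - 1 := by
    have : n < A := by exact_mod_cast h2
    omega
  constructor
  · rw [hn]; exact_mod_cast hn0
  · rw [hn, hA]
    have : (n:ℝ) ≤ (A:ℝ) - 1 := by exact_mod_cast hnA
    linarith

lemma key_neg (hvW : v ∈ D.W) (hlam : D.IsWeight lam)
    (hdom : D.IsDominant (D.dotZero v lam)) (hres : D.IsRestricted (D.dotZero v lam))
    {α : E} (hα : α ∈ D.Rpos) (hvn : v α ∉ D.Rpos) :
    D.coroot (v α) lam ≤ -1 ∧ -(D.coroot (-(v α)) D.rho) ≤ D.coroot (v α) lam := by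
  have hαR := D.rpos_subset hα
  have hvαR := D.W_root_stable v hvW α hαR
  have hγ : -(v α) ∈ D.Rpos := by
    by_contra hneg
    exact hvn ((D.pos_iff _ hvαR).mpr hneg)
  have hγR := D.rpos_subset hγ
  obtain ⟨n, hn⟩ := hlam (v α) hvαR
  obtain ⟨a, ha⟩ := D.rho_int hαR
  obtain ⟨A, hA⟩ := D.rho_int hγR
  have hapos : (0:ℝ) < a := ha ▸ D.rho_pos hα
  have halt : (a:ℝ) < D.p := ha ▸ D.p_gt α hα
  have hApos : (0:ℝ) < A := hA ▸ D.rho_pos hγ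
  have hppos : (0:ℝ) < D.p := by exact_mod_cast D.p_pos
  have hsb := D.simple_bounds hdom hres
  have hb := D.coroot_bound hγ (fun β hβ => (hsb β hβ).1) (fun β hβ => (hsb β hβ).2)
  have hcneg : D.coroot (-(v α)) (v D.rho + (D.p : ℝ) • lam)
      = -(D.coroot α D.rho + (D.p : ℝ) * D.coroot (v α) lam) := by
    rw [D.coroot_neg hvαR, D.coroot_z hvW hα]
  rw [hcneg, hn, ha, hA, one_mul] at hb
  obtain ⟨hb1, hb2⟩ := hb
  have h1 : (n:ℝ) < 0 := by nlinarith
  have h2 : -(A:ℝ) - 1 < (n:ℝ) := by nlinarith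
  have hn1 : n ≤ -1 := by
    have : n < (0:ℤ) := by exact_mod_cast h1
    omega
  have hnA : -A ≤ n := by
    have : -A - 1 < n := by exact_mod_cast h2
    omega
  constructor
  · rw [hn]
    have : (n:ℝ) ≤ -1 := by exact_mod_cast hn1
    linarith
  · rw [hn, hA]
    exact_mod_cast hnA

end Key

end RootSystemData

/-- For every `w ∈ W⁰` one has `ℓ(τ₀ · w) = ℓ(τ₀) − ℓ(w)`.
Here `w = t_lam · v` is encoded as the pair `(v, lam)`, and
`τ₀ · w = t_{ρ + w₀ lam} · (w₀ v)`. -/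
theorem statement4 {E : Type} [AddCommGroup E] [Module ℝ E] [DecidableEq E]
    (D : RootSystemData E) (v : E ≃ₗ[ℝ] E) (lam : E) (h : D.InW0 v lam) :
    D.lenT (D.w0 * v) (D.rho + D.w0 lam) = D.lenT D.w0 D.rho - D.lenT v lam := by
  classical
  obtain ⟨hvW, hlam, hdom, hres⟩ := h
  have hw0W := D.w0_mem
  have hvR : ∀ α ∈ D.Rpos, v α ∈ D.R := fun α hα => D.W_root_stable v hvW α (D.rpos_subset hα)
  -- equivariance for v
  have hequiv : ∀ α x : E, D.coroot α (v.symm x) = D.coroot (v α) x := by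
    intro α x
    have := D.W_equivariant v hvW α (v.symm x)
    rw [v.apply_symm_apply] at this
    exact this.symm
  -- condition: w0 γ ∈ Rpos ↔ γ ∉ Rpos, for γ ∈ R
  have hcond : ∀ γ ∈ D.R, (D.w0 γ ∈ D.Rpos ↔ γ ∉ D.Rpos) := by
    intro γ hγ
    have hw0γR : D.w0 γ ∈ D.R := D.W_root_stable D.w0 hw0W γ hγ
    constructor
    · intro hm hγp
      have := D.w0_neg γ hγp
      exact ((D.pos_iff _ hw0γR).mp hm) this
    · intro hγn
      have hnγ : -γ ∈ D.Rpos := by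
        by_contra hneg
        exact hγn ((D.pos_iff γ hγ).mpr hneg)
      have := D.w0_neg (-γ) hnγ
      rwa [map_neg, neg_neg] at this
  -- the argument of the left-hand side
  have harg : (D.w0 * v).symm (D.rho + D.w0 lam) = -(v.symm D.rho) + v.symm lam := by
    rw [LinearEquiv.symm_apply_eq]
    show D.rho + D.w0 lam = D.w0 (v (-(v.symm D.rho) + v.symm lam))
    rw [map_add, map_neg, v.apply_symm_apply, v.apply_symm_apply, map_add, map_neg, D.w0_rho,
      neg_neg]
  have hw0arg : D.w0.symm D.rho = -D.rho := by rw [D.w0_symm_apply, D.w0_rho]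
  -- filters
  have hf1 : D.Rpos.filter (fun α => (D.w0 * v) α ∈ D.Rpos)
      = D.Rpos.filter (fun α => ¬(v α ∈ D.Rpos)) := by
    refine Finset.filter_congr fun α hα => ?_
    exact hcond (v α) (hvR α hα)
  have hf2 : D.Rpos.filter (fun α => -((D.w0 * v) α) ∈ D.Rpos)
      = D.Rpos.filter (fun α => v α ∈ D.Rpos) := by
    refine Finset.filter_congr fun α hα => ?_
    have hvαR := hvR α hα
    have hw0vαR : D.w0 (v α) ∈ D.R := D.W_root_stable D.w0 hw0W _ hvαR
    constructor
    · intro hm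
      by_contra hvn
      have := (hcond (v α) hvαR).mpr hvn
      exact ((D.pos_iff _ hw0vαR).mp this) hm
    · intro hm
      exact D.w0_neg (v α) hm
  have hf5 : D.Rpos.filter (fun α => -(v α) ∈ D.Rpos)
      = D.Rpos.filter (fun α => ¬(v α ∈ D.Rpos)) := by
    refine Finset.filter_congr fun α hα => ?_
    have hvαR := hvR α hα
    constructor
    · intro hm hvp
      exact ((D.pos_iff _ hvαR).mp hvp) hm
    · intro hvn
      by_contra hneg
      exact hvn ((D.pos_iff _ hvαR).mpr hneg)
  have hf3 : D.Rpos.filter (fun α => D.w0 α ∈ D.Rpos) = ∅ := by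
    refine Finset.filter_false_of_mem fun α hα => ?_
    exact fun hm => ((hcond α (D.rpos_subset hα)).mp hm) hα
  have hf4 : D.Rpos.filter (fun α => -(D.w0 α) ∈ D.Rpos) = D.Rpos := by
    exact Finset.filter_true_of_mem fun α hα => D.w0_neg α hα
  simp only [RootSystemData.lenT, RootSystemData.len, harg, hw0arg, hf1, hf2, hf3, hf4, hf5,
    Finset.sum_empty, zero_add]
  -- termwise rewrites
  have e1 : ∑ α ∈ D.Rpos.filter (fun α => ¬(v α ∈ D.Rpos)),
        |D.coroot α (-(v.symm D.rho) + v.symm lam)|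
      = ∑ α ∈ D.Rpos.filter (fun α => ¬(v α ∈ D.Rpos)),
        (D.coroot (v α) lam + D.coroot (-(v α)) D.rho) := by
    refine Finset.sum_congr rfl fun α hα => ?_
    obtain ⟨hα, hvn⟩ := Finset.mem_filter.mp hα
    obtain ⟨k1, k2⟩ := D.key_neg hvW hlam hdom hres hα hvn
    have hc : D.coroot α (-(v.symm D.rho) + v.symm lam)
        = D.coroot (v α) lam + D.coroot (-(v α)) D.rho := by
      rw [map_add, map_neg, hequiv, hequiv, D.coroot_neg (hvR α hα)]
      ring
    rw [hc]
    exact abs_of_nonneg (by linarith)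
  have e2 : ∑ α ∈ D.Rpos.filter (fun α => v α ∈ D.Rpos),
        |1 + D.coroot α (-(v.symm D.rho) + v.symm lam)|
      = ∑ α ∈ D.Rpos.filter (fun α => v α ∈ D.Rpos),
        (D.coroot (v α) D.rho - 1 - D.coroot (v α) lam) := by
    refine Finset.sum_congr rfl fun α hα => ?_
    obtain ⟨hα, hvp⟩ := Finset.mem_filter.mp hα
    obtain ⟨k1, k2⟩ := D.key_pos hvW hlam hdom hres hα hvp
    have hc : D.coroot α (-(v.symm D.rho) + v.symm lam)
        = D.coroot (v α) lam - D.coroot (v α) D.rho := by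
      rw [map_add, map_neg, hequiv, hequiv]
      ring
    rw [hc]
    rw [abs_of_nonpos (by linarith)]
    ring
  have e3 : ∑ α ∈ D.Rpos.filter (fun α => v α ∈ D.Rpos), |D.coroot α (v.symm lam)|
      = ∑ α ∈ D.Rpos.filter (fun α => v α ∈ D.Rpos), D.coroot (v α) lam := by
    refine Finset.sum_congr rfl fun α hα => ?_
    obtain ⟨hα, hvp⟩ := Finset.mem_filter.mp hα
    obtain ⟨k1, k2⟩ := D.key_pos hvW hlam hdom hres hα hvp
    rw [hequiv]
    exact abs_of_nonneg k1
  have e4 : ∑ α ∈ D.Rpos.filter (fun α => ¬(v α ∈ D.Rpos)), |1 + D.coroot α (v.symm lam)|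
      = ∑ α ∈ D.Rpos.filter (fun α => ¬(v α ∈ D.Rpos)), (-1 - D.coroot (v α) lam) := by
    refine Finset.sum_congr rfl fun α hα => ?_
    obtain ⟨hα, hvn⟩ := Finset.mem_filter.mp hα
    obtain ⟨k1, k2⟩ := D.key_neg hvW hlam hdom hres hα hvn
    rw [hequiv]
    rw [abs_of_nonpos (by linarith)]
    ring
  have e5 : ∑ α ∈ D.Rpos, |1 + D.coroot α (-D.rho)|
      = ∑ α ∈ D.Rpos.filter (fun α => v α ∈ D.Rpos), (D.coroot (v α) D.rho - 1)
        + ∑ α ∈ D.Rpos.filter (fun α => ¬(v α ∈ D.Rpos)), (D.coroot (-(v α)) D.rho - 1) := by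
    have h5a : ∑ α ∈ D.Rpos, |1 + D.coroot α (-D.rho)|
        = ∑ α ∈ D.Rpos, (D.coroot α D.rho - 1) := by
      refine Finset.sum_congr rfl fun α hα => ?_
      obtain ⟨k, hk⟩ := D.rho_int (D.rpos_subset hα)
      have hpos := D.rho_pos hα
      have hk1 : (1:ℝ) ≤ D.coroot α D.rho := by
        rw [hk]
        have : (0:ℤ) < k := by exact_mod_cast hk ▸ hpos
        exact_mod_cast this
      rw [map_neg, abs_of_nonpos (by linarith)]
      ring
    have h5b := D.sum_perm hvW (fun β => D.coroot β D.rho - 1)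
    rw [h5a, ← h5b]
    rw [← Finset.sum_filter_add_sum_filter_not D.Rpos (fun α => v α ∈ D.Rpos)
      (fun α => D.coroot (if v α ∈ D.Rpos then v α else -(v α)) D.rho - 1)]
    congr 1
    · refine Finset.sum_congr rfl fun α hα => ?_
      obtain ⟨hα, hvp⟩ := Finset.mem_filter.mp hα
      rw [if_pos hvp]
    · refine Finset.sum_congr rfl fun α hα => ?_
      obtain ⟨hα, hvn⟩ := Finset.mem_filter.mp hα
      rw [if_neg hvn]
  rw [e1, e2, e3, e4, e5]
  simp only [Finset.sum_add_distrib, Finset.sum_sub_distrib]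
  have hneg1 : ∑ x ∈ Finset.filter (fun α => ¬(v α ∈ D.Rpos)) D.Rpos, (-1:ℝ)
      = -∑ x ∈ Finset.filter (fun α => ¬(v α ∈ D.Rpos)) D.Rpos, (1:ℝ) := by
    rw [← Finset.sum_neg_distrib]
  rw [hneg1]
  ring
end

section
/- Let Ā be a finite-dimensional ℤ-graded k-algebra. Then the Jacobson radical of Ā (the intersection of all maximal left ideals of Ā) coincides with the graded radical rad^gr(Ā) (the intersection of all maximal graded left ideals of Ā); in particular, the Jacobson radical of Ā is a homogeneous (graded) two-sided ideal. -/
/-- A submodule `N` of a graded module `M = ⊕ₙ Mₙ` (with grading `gM : ℤ → Submodule k M`)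
is *graded* (homogeneous) if it is generated, as an `A`-module, by its homogeneous
elements; equivalently (for modules with a decomposition) `N = ⊕ₙ (N ∩ Mₙ)`. -/
def IsGradedSubmodule {k A M : Type} [Semiring k] [Ring A]
    [AddCommGroup M] [Module A M] [Module k M]
    (gM : ℤ → Submodule k M) (N : Submodule A M) : Prop :=
  N = Submodule.span A (⋃ n : ℤ, ((N : Set M) ∩ (gM n : Set M)))

/-- A *maximal graded submodule*: a proper graded submodule which is maximal among
proper graded submodules. -/
def IsMaxGradedSubmodule {k A M : Type} [Semiring k] [Ring A]
    [AddCommGroup M] [Module A M] [Module k M]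
    (gM : ℤ → Submodule k M) (N : Submodule A M) : Prop :=
  IsGradedSubmodule gM N ∧ N ≠ ⊤ ∧
    ∀ N' : Submodule A M, IsGradedSubmodule gM N' → N < N' → N' = ⊤

/-- The graded radical `rad^gr(M)` of a graded module: the intersection of all maximal
graded submodules. -/
def gradedRadicalMod {k A M : Type} [Semiring k] [Ring A]
    [AddCommGroup M] [Module A M] [Module k M]
    (gM : ℤ → Submodule k M) : Submodule A M :=
  sInf {N : Submodule A M | IsMaxGradedSubmodule gM N}

/-- The graded radical `rad^gr(A)` of a graded algebra: the intersection of all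
maximal graded left ideals. -/
def gradedRadical {k A : Type} [Semiring k] [Ring A] [Module k A]
    (gA : ℤ → Submodule k A) : Ideal A :=
  gradedRadicalMod gA

/-! ### Auxiliary development -/

open DirectSum
open scoped Classical

set_option linter.unusedSectionVars false
set_option maxHeartbeats 1000000

section Aux

variable {k A : Type} [Field k] [Ring A] [Algebra k A] [FiniteDimensional k A]
  (gA : ℤ → Submodule k A) [GradedAlgebra gA]

/-- The `n`-th homogeneous component, as an additive monoid hom. -/
noncomputable def pcHom (n : ℤ) : A →+ A :=
  ((gA n).subtype.toAddMonoidHom).comp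
    ((DFinsupp.evalAddMonoidHom n).comp (decomposeAddEquiv gA).toAddMonoidHom)

lemma pcHom_apply (n : ℤ) (a : A) : pcHom gA n a = (decompose gA a n : A) := rfl

lemma pc_mul_homog_left {a : A} {e : ℤ} (ha : a ∈ gA e) (b : A) (n : ℤ) :
    (decompose gA (a * b) n : A) = a * (decompose gA b (n - e) : A) := by
  conv_lhs => rw [← DirectSum.sum_support_decompose gA b]
  rw [Finset.mul_sum, ← pcHom_apply, map_sum]
  have h : ∀ j ∈ (decompose gA b).support,
      pcHom gA n (a * (decompose gA b j : A)) =
        if j = n - e then a * (decompose gA b (n - e) : A) else 0 := by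
    intro j _
    rw [pcHom_apply]
    by_cases hj : j = n - e
    · subst hj
      rw [if_pos rfl]
      have hmem : a * (decompose gA b (n - e) : A) ∈ gA n := by
        have h2 := SetLike.mul_mem_graded ha (SetLike.coe_mem ((decompose gA b) (n - e)))
        rwa [show e + (n - e) = n by ring] at h2
      exact decompose_of_mem_same gA hmem
    · rw [if_neg hj]
      exact decompose_of_mem_ne gA
        (SetLike.mul_mem_graded ha (SetLike.coe_mem _)) (by omega)
  rw [Finset.sum_congr rfl h, Finset.sum_ite_eq']
  by_cases hm : n - e ∈ (decompose gA b).support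
  · rw [if_pos hm]
  · rw [if_neg hm]
    rw [DFinsupp.notMem_support_iff] at hm
    rw [hm]
    simp

lemma pc_mul (a b : A) (n : ℤ) :
    (decompose gA (a * b) n : A) =
      ∑ i ∈ (decompose gA a).support,
        (decompose gA a i : A) * (decompose gA b (n - i) : A) := by
  conv_lhs => rw [← DirectSum.sum_support_decompose gA a]
  rw [Finset.sum_mul, ← pcHom_apply, map_sum]
  exact Finset.sum_congr rfl fun i _ => by
    rw [pcHom_apply]; exact pc_mul_homog_left gA (SetLike.coe_mem _) b n

lemma pc_mul_mem {P : Submodule k A} {a b : A}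
    (h : ∀ i j : ℤ, (decompose gA a i : A) * (decompose gA b j : A) ∈ P) (n : ℤ) :
    (decompose gA (a * b) n : A) ∈ P := by
  rw [pc_mul]
  exact Submodule.sum_mem P fun i _ => h i (n - i)

lemma pc_mul_homog_right {s : A} {d : ℤ} (hs : s ∈ gA d) (c : A) (n : ℤ) :
    (decompose gA (c * s) n : A) = (decompose gA c (n - d) : A) * s := by
  rw [pc_mul]
  rw [Finset.sum_eq_single (n - d)]
  · rw [show n - (n - d) = d by ring, decompose_of_mem_same gA hs]
  · intro i _ hi
    rw [decompose_of_mem_ne gA hs (show d ≠ n - i by omega), mul_zero]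
  · intro hns
    rw [DFinsupp.notMem_support_iff] at hns
    rw [hns]
    simp

/-- all homogeneous components above `d` vanish -/
def TopLE (a : A) (d : ℤ) : Prop := ∀ n : ℤ, d < n → (decompose gA a n : A) = 0

lemma support_le {a : A} {d : ℤ} (h : TopLE gA a d) {i : ℤ}
    (hi : i ∈ (decompose gA a).support) : i ≤ d := by
  by_contra hlt
  rw [DFinsupp.mem_support_iff] at hi
  exact hi (Subtype.ext (h i (by omega)))

lemma TopLE.mul {a b : A} {d e : ℤ} (ha : TopLE gA a d) (hb : TopLE gA b e) :
    TopLE gA (a * b) (d + e) := by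
  intro n hn
  rw [pc_mul gA]
  refine Finset.sum_eq_zero fun i hi => ?_
  rw [hb (n - i) (by have := support_le gA ha hi; omega), mul_zero]

lemma TopLE.pc_mul_top {a b : A} {d e : ℤ} (ha : TopLE gA a d) (hb : TopLE gA b e) :
    (decompose gA (a * b) (d + e) : A)
      = (decompose gA a d : A) * (decompose gA b e : A) := by
  rw [pc_mul gA]
  rw [Finset.sum_eq_single d]
  · rw [show d + e - d = e by ring]
  · intro i hi hne
    have hle := support_le gA ha hi
    rw [hb (d + e - i) (by omega), mul_zero]
  · intro hd
    rw [DFinsupp.notMem_support_iff] at hd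
    rw [hd]
    simp

/-- An ideal contains all homogeneous components of its elements. -/
def HgI (I : Ideal A) : Prop := ∀ a ∈ I, ∀ n : ℤ, (decompose gA a n : A) ∈ I

/-- A `k`-submodule contains all homogeneous components of its elements. -/
def HgK (P : Submodule k A) : Prop := ∀ a ∈ P, ∀ n : ℤ, (decompose gA a n : A) ∈ P

lemma hgI_iff (N : Ideal A) : IsGradedSubmodule gA N ↔ HgI gA N := by
  constructor
  · intro h a ha
    have hx : a ∈ Submodule.span A (⋃ n : ℤ, ((N : Set A) ∩ (gA n : Set A))) := h ▸ ha
    clear ha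
    induction hx using Submodule.span_induction with
    | mem x hx =>
      intro n
      obtain ⟨_, ⟨m, rfl⟩, hxm⟩ := hx
      by_cases hm : m = n
      · subst hm; rw [decompose_of_mem_same gA hxm.2]; exact hxm.1
      · rw [decompose_of_mem_ne gA hxm.2 hm]; exact N.zero_mem
    | zero => intro n; simp
    | add x y hx hy ihx ihy =>
      intro n; rw [decompose_add]; exact N.add_mem (ihx n) (ihy n)
    | smul c x hx ih =>
      intro n
      rw [smul_eq_mul]
      exact pc_mul_mem gA (P := N.restrictScalars k)
        (fun i j => Ideal.mul_mem_left N _ (ih j)) n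
  · intro h
    apply le_antisymm
    · intro a ha
      rw [← DirectSum.sum_support_decompose gA a]
      refine Submodule.sum_mem _ fun i _ => Submodule.subset_span ?_
      exact Set.mem_iUnion.2 ⟨i, h a ha i, SetLike.coe_mem _⟩
    · rw [Submodule.span_le]
      exact Set.iUnion_subset fun n => Set.inter_subset_left

lemma hgI_sup {N N' : Ideal A} (h : HgI gA N) (h' : HgI gA N') : HgI gA (N ⊔ N') := by
  intro a ha n
  obtain ⟨x, hx, y, hy, rfl⟩ := Submodule.mem_sup.1 ha
  rw [decompose_add]
  exact Submodule.mem_sup.2 ⟨_, h x hx n, _, h' y hy n, rfl⟩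

lemma hgI_bot : HgI gA (⊥ : Ideal A) := by
  intro a ha n
  rw [Submodule.mem_bot] at ha
  subst ha; simp

lemma hgK_mul {V W : Submodule k A} (hV : HgK gA V) (hW : HgK gA W) : HgK gA (V * W) := by
  intro a ha n
  refine Submodule.mul_induction_on ha
    (fun v hv w hw =>
      pc_mul_mem gA (fun i j => Submodule.mul_mem_mul (hV v hv i) (hW w hw j)) n)
    (fun x y hx hy => by rw [decompose_add]; exact Submodule.add_mem _ hx hy)

lemma rs_lt {I J : Ideal A} (h : I < J) :
    I.restrictScalars k < J.restrictScalars k := by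
  rw [lt_iff_le_and_ne] at *
  exact ⟨fun x hx => h.1 hx, fun he => h.2 (by ext x; exact SetLike.ext_iff.1 he x)⟩

/-- Everything in the Jacobson radical is left quasi-regular. -/
lemma exists_left_inv {j : A} (hj : j ∈ sInf {I : Ideal A | I.IsMaximal}) :
    ∃ u : A, u * (1 - j) = 1 := by
  by_cases h : Submodule.span A ({1 - j} : Set A) = ⊤
  · have h1 : (1 : A) ∈ Submodule.span A ({1 - j} : Set A) := h ▸ Submodule.mem_top
    obtain ⟨u, hu⟩ := Submodule.mem_span_singleton.1 h1
    exact ⟨u, by rwa [smul_eq_mul] at hu⟩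
  · exfalso
    obtain ⟨I, hI, hle⟩ := Ideal.exists_le_maximal _ h
    have h1 : 1 - j ∈ I := hle (Submodule.subset_span rfl)
    have h2 : j ∈ I := (Submodule.mem_sInf.1 hj) I hI
    exact hI.ne_top (I.eq_top_iff_one.2 (by have := I.add_mem h1 h2; simpa using this))

lemma unit_one_sub_of_pow_bot {M : Submodule k A} {m : ℕ} (hm : M ^ m = ⊥)
    {x : A} (hx : x ∈ M) : IsUnit (1 - x) := by
  have hnil : IsNilpotent x := by
    refine ⟨m, ?_⟩
    have := Submodule.pow_mem_pow M hx m
    rw [hm] at this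
    simpa using this
  exact hnil.isUnit_one_sub

lemma pow_stabilizes (J' : Submodule k A) (hmul : J' * J' ≤ J') :
    ∃ m : ℕ, 1 ≤ m ∧ ∀ t : ℕ, J' ^ (m + t) = J' ^ m := by
  have hle : ∀ n : ℕ, J' ^ (n + 2) ≤ J' ^ (n + 1) := by
    intro n
    induction n with
    | zero =>
      rw [show (0:ℕ) + 2 = 2 from rfl, show (0:ℕ) + 1 = 1 from rfl, pow_two, pow_one]
      exact hmul
    | succ n ih =>
      calc J' ^ (n + 1 + 2) = J' ^ (n + 2) * J' := by
            rw [show n + 1 + 2 = (n + 2) + 1 from by omega]; exact pow_succ J' (n + 2)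
        _ ≤ J' ^ (n + 1) * J' := mul_le_mul' ih le_rfl
        _ = J' ^ (n + 1 + 1) := (pow_succ J' (n + 1)).symm
  have hex : ∃ n : ℕ, J' ^ (n + 2) = J' ^ (n + 1) := by
    by_contra h
    push_neg at h
    have hlt : ∀ n : ℕ, Module.finrank k (J' ^ (n + 2) : Submodule k A)
        < Module.finrank k (J' ^ (n + 1) : Submodule k A) :=
      fun n => Submodule.finrank_lt_finrank_of_lt (lt_of_le_of_ne (hle n) (h n))
    have hb : ∀ n : ℕ, Module.finrank k (J' ^ (n + 1) : Submodule k A) + n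
        ≤ Module.finrank k (J' ^ 1 : Submodule k A) := by
      intro n
      induction n with
      | zero => simp
      | succ n ih =>
        have h1 := hlt n
        rw [show n + 1 + 1 = n + 2 from by omega]
        omega
    have := hb (Module.finrank k (J' ^ 1 : Submodule k A) + 1)
    omega
  obtain ⟨n, hn⟩ := hex
  refine ⟨n + 1, by omega, ?_⟩
  intro t
  induction t with
  | zero => rfl
  | succ t ih =>
    calc J' ^ (n + 1 + (t + 1)) = J' ^ (n + 1 + t) * J' := by
          rw [show n + 1 + (t + 1) = (n + 1 + t) + 1 from by omega]; exact pow_succ J' (n + 1 + t)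
      _ = J' ^ (n + 1) * J' := by rw [ih]
      _ = J' ^ (n + 2) := by
          rw [show n + 2 = (n + 1) + 1 from by omega]; exact (pow_succ J' (n + 1)).symm
      _ = J' ^ (n + 1) := hn

/-- The Jacobson radical of a finite-dimensional algebra is nilpotent. -/
lemma jac_nilpotent :
    ∃ m : ℕ, 1 ≤ m ∧
      ((sInf {I : Ideal A | I.IsMaximal}).restrictScalars k) ^ m = ⊥ := by
  set J : Ideal A := sInf {I : Ideal A | I.IsMaximal} with hJdef
  set Jk : Submodule k A := J.restrictScalars k with hJk
  have hmul : Jk * Jk ≤ Jk :=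
    Submodule.mul_le.2 fun x hx y hy => Ideal.mul_mem_left J x hy
  obtain ⟨m, hm1, hstab⟩ := pow_stabilizes Jk hmul
  refine ⟨m, hm1, ?_⟩
  by_contra hSne
  set S : Submodule k A := Jk ^ m with hS
  have hSS : S * S = S := by rw [hS, ← pow_add]; exact hstab m
  have hpowle : ∀ n : ℕ, Jk ^ (n + 1) ≤ Jk := by
    intro n
    induction n with
    | zero => rw [pow_one]
    | succ n ih =>
      calc Jk ^ (n + 1 + 1) = Jk ^ (n + 1) * Jk := pow_succ Jk (n + 1)
        _ ≤ Jk * Jk := mul_le_mul' ih le_rfl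
        _ ≤ Jk := hmul
  have hSJ : S ≤ Jk := by
    obtain ⟨m', rfl⟩ : ∃ m', m = m' + 1 := ⟨m - 1, by omega⟩
    exact hpowle m'
  set F : Set (Ideal A) := {T : Ideal A | S * T.restrictScalars k ≠ ⊥} with hF
  have hTop : (⊤ : Ideal A) ∈ F := by
    intro h0
    apply hSne
    have h1 : S * S ≤ S * (⊤ : Ideal A).restrictScalars k :=
      mul_le_mul' le_rfl le_top
    rw [h0, hSS] at h1
    exact le_bot_iff.1 h1
  set ns : Set ℕ := (fun T : Ideal A => Module.finrank k (T.restrictScalars k : Submodule k A)) '' F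
  obtain ⟨T, hTF, hTrank⟩ := Nat.sInf_mem (⟨_, ⟨⊤, hTop, rfl⟩⟩ : ns.Nonempty)
  dsimp only at hTrank
  have hmin : ∀ T' ∈ F, Module.finrank k (T.restrictScalars k : Submodule k A)
      ≤ Module.finrank k (T'.restrictScalars k : Submodule k A) := by
    intro T' h'
    have hmem : Module.finrank k (T'.restrictScalars k : Submodule k A) ∈ ns :=
      ⟨T', h', rfl⟩
    have := Nat.sInf_le hmem
    omega
  have hex : ∃ a ∈ T, S * Submodule.span k ({a} : Set A) ≠ ⊥ := by
    by_contra h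
    push_neg at h
    apply hTF
    rw [eq_bot_iff]
    refine Submodule.mul_le.2 fun s hs t ht => ?_
    have h2 : s * t ∈ S * Submodule.span k ({t} : Set A) :=
      Submodule.mul_mem_mul hs (Submodule.subset_span rfl)
    rw [h t ht] at h2
    exact h2
  obtain ⟨a, haT, hSa⟩ := hex
  have hrep : ∀ x ∈ S * Submodule.span k ({a} : Set A), ∃ s ∈ S, x = s * a := by
    intro x hx
    refine Submodule.mul_induction_on hx ?_ ?_
    · intro s hs y hy
      obtain ⟨c, rfl⟩ := Submodule.mem_span_singleton.1 hy
      exact ⟨c • s, S.smul_mem c hs, by rw [smul_mul_assoc, mul_smul_comm]⟩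
    · rintro x y ⟨s, hs, rfl⟩ ⟨t, ht, rfl⟩
      exact ⟨s + t, S.add_mem hs ht, (add_mul s t a).symm⟩
  set G : Set A := ((S * Submodule.span k ({a} : Set A) : Submodule k A) : Set A) with hG
  set T' : Ideal A := Submodule.span A G with hT'
  have hT'T : T' ≤ T := by
    rw [hT', Submodule.span_le]
    intro x hx
    obtain ⟨s, hs, rfl⟩ := hrep x hx
    exact Ideal.mul_mem_left T s haT
  have hT'F : T' ∈ F := by
    intro hbot
    apply hSa
    have hsub : (S * Submodule.span k ({a} : Set A) : Submodule k A)
        ≤ T'.restrictScalars k := fun x hx => Submodule.subset_span hx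
    have h1 : S * (S * Submodule.span k ({a} : Set A)) ≤ S * T'.restrictScalars k :=
      mul_le_mul' le_rfl hsub
    rw [← mul_assoc, hSS, hbot] at h1
    exact le_bot_iff.1 h1
  have heq : T'.restrictScalars k = T.restrictScalars k :=
    Submodule.eq_of_le_of_finrank_le (fun x hx => hT'T hx) (by
      have := hmin T' hT'F; omega)
  have haT' : a ∈ T' := by
    have : a ∈ T.restrictScalars k := haT
    rw [← heq] at this
    exact this
  set Z : Ideal A :=
    Submodule.map (LinearMap.toSpanSingleton A A a) (sInf {I : Ideal A | I.IsMaximal}) with hZ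
  have hGZ : G ⊆ (Z : Set A) := by
    intro x hx
    obtain ⟨s, hs, rfl⟩ := hrep x hx
    exact ⟨s, hSJ hs, by rw [LinearMap.toSpanSingleton_apply, smul_eq_mul]⟩
  have haZ : a ∈ Z := by
    have : T' ≤ Z := by rw [hT', Submodule.span_le]; exact hGZ
    exact this haT'
  obtain ⟨w, hwJ, hwa⟩ := haZ
  rw [LinearMap.toSpanSingleton_apply, smul_eq_mul] at hwa
  obtain ⟨u, hu⟩ := exists_left_inv hwJ
  have ha0 : a = 0 := by
    have h1 : (1 - w) * a = 0 := by rw [sub_mul, one_mul, hwa, sub_self]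
    calc a = 1 * a := (one_mul a).symm
    _ = (u * (1 - w)) * a := by rw [hu]
    _ = u * ((1 - w) * a) := by rw [mul_assoc]
    _ = 0 := by rw [h1, mul_zero]
  apply hSa
  rw [ha0, Submodule.span_zero_singleton, Submodule.mul_bot]

/-- The Jacobson radical is a graded ideal. -/
lemma hgJ : HgI gA (sInf {I : Ideal A | I.IsMaximal}) := by
  set J : Ideal A := sInf {I : Ideal A | I.IsMaximal} with hJdef
  obtain ⟨m, hm1, hmbot⟩ := jac_nilpotent (k := k) (A := A)
  set S₀ : Set A :=
    {x | ∃ d : ℤ, ∃ a ∈ J, TopLE gA a d ∧ x = (decompose gA a d : A)} with hS₀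
  set M : Submodule k A := Submodule.span k S₀ with hM
  -- homogeneous pieces absorb homogeneous left multiplication
  have hS₀mul : ∀ x ∈ S₀, ∀ (c : A) (i : ℤ), (decompose gA c i : A) * x ∈ S₀ := by
    rintro x ⟨d, a, haJ, htop, rfl⟩ c i
    refine ⟨i + d, (decompose gA c i : A) * a, Ideal.mul_mem_left J _ haJ, ?_, ?_⟩
    · intro n hn
      rw [pc_mul_homog_left gA (SetLike.coe_mem _) a n, htop (n - i) (by omega), mul_zero]
    · rw [pc_mul_homog_left gA (SetLike.coe_mem _) a (i + d), show i + d - i = d by ring]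
  have hMstable : ∀ (c x : A), x ∈ M → c * x ∈ M := by
    have hS₀M : ∀ x ∈ S₀, ∀ c : A, c * x ∈ M := by
      intro x hx c
      have hcx : c * x = ∑ i ∈ (decompose gA c).support, (decompose gA c i : A) * x := by
        conv_lhs => rw [← DirectSum.sum_support_decompose gA c]
        rw [Finset.sum_mul]
      rw [hcx]
      exact Submodule.sum_mem _ fun i _ =>
        Submodule.subset_span (hS₀mul x hx c i)
    intro c x hx
    induction hx using Submodule.span_induction with
    | mem y hy => exact hS₀M y hy c
    | zero => rw [mul_zero]; exact M.zero_mem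
    | add y z hy hz ihy ihz => rw [mul_add]; exact M.add_mem ihy ihz
    | smul t y hy ih => rw [mul_smul_comm]; exact M.smul_mem t ih
  -- powers of M are controlled by powers of J
  set Jk : Submodule k A := J.restrictScalars k with hJk
  set W : ℕ → Submodule k A := fun t => Submodule.span k
    {x | ∃ d : ℤ, ∃ a ∈ (Jk ^ t : Submodule k A), TopLE gA a d ∧
        x = (decompose gA a d : A)} with hW
  have hMW1 : M ≤ W 1 := by
    rw [hM, hW]
    refine Submodule.span_mono ?_
    rintro x ⟨d, a, haJ, htop, rfl⟩
    exact ⟨d, a, by rwa [pow_one], htop, rfl⟩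
  have hWmul : ∀ t : ℕ, W t * W 1 ≤ W (t + 1) := by
    intro t
    simp only [hW]
    rw [Submodule.span_mul_span]
    rw [Submodule.span_le]
    rintro z hz
    rw [Set.mem_mul] at hz
    obtain ⟨x, ⟨d, a, haJ, htopa, rfl⟩, y, ⟨e, b, hbJ, htopb, rfl⟩, rfl⟩ := hz
    refine Submodule.subset_span ⟨d + e, a * b, ?_, TopLE.mul gA htopa htopb, ?_⟩
    · rw [pow_succ]
      exact Submodule.mul_mem_mul haJ (by rwa [pow_one] at hbJ)
    · rw [TopLE.pc_mul_top gA htopa htopb]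
  have hMpow : ∀ t : ℕ, M ^ (t + 1) ≤ W (t + 1) := by
    intro t
    induction t with
    | zero => rw [pow_one]; exact hMW1
    | succ t ih =>
      rw [pow_succ]
      exact (mul_le_mul' ih hMW1).trans (hWmul (t + 1))
  have hWbot : W m = ⊥ := by
    rw [hW, eq_bot_iff, Submodule.span_le]
    rintro x ⟨d, a, haJ, _, rfl⟩
    rw [hmbot] at haJ
    rw [Submodule.mem_bot] at haJ
    subst haJ
    simp
  have hMbot : M ^ m = ⊥ := by
    obtain ⟨m', rfl⟩ : ∃ m', m = m' + 1 := ⟨m - 1, by omega⟩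
    rw [eq_bot_iff]
    exact (hMpow m').trans (le_of_eq hWbot)
  -- M is inside every maximal left ideal
  have hMJ : ∀ x ∈ M, x ∈ J := by
    intro x hx
    rw [hJdef]
    rw [Submodule.mem_sInf]
    intro I hI
    by_contra hxI
    have hlt : I < I ⊔ Submodule.span A ({x} : Set A) := by
      refine lt_of_le_of_ne le_sup_left fun h => hxI ?_
      rw [h]
      exact Submodule.mem_sup_right (Submodule.subset_span rfl)
    have hImax : Ideal.IsMaximal I := hI
    have htop : I ⊔ Submodule.span A ({x} : Set A) = ⊤ := hImax.out.2 _ hlt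
    have h1 : (1 : A) ∈ I ⊔ Submodule.span A ({x} : Set A) := htop ▸ Submodule.mem_top
    obtain ⟨i, hi, y, hy, hiy⟩ := Submodule.mem_sup.1 h1
    obtain ⟨c, rfl⟩ := Submodule.mem_span_singleton.1 hy
    rw [smul_eq_mul] at hiy
    have hcx : c * x ∈ M := hMstable c x hx
    have hunit : IsUnit (1 - c * x) := unit_one_sub_of_pow_bot hMbot hcx
    have hieq : i = 1 - c * x := by rw [← hiy]; abel
    exact hImax.ne_top (Ideal.eq_top_of_isUnit_mem _ hi (hieq ▸ hunit))
  -- top components of elements of J lie in J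
  have htopJ : ∀ a ∈ J, ∀ d : ℤ, TopLE gA a d → (decompose gA a d : A) ∈ J :=
    fun a ha d htop => hMJ _ (Submodule.subset_span ⟨d, a, ha, htop, rfl⟩)
  -- induction on the size of the support
  suffices H : ∀ (N : ℕ) (a : A), a ∈ J → (decompose gA a).support.card ≤ N →
      ∀ n : ℤ, (decompose gA a n : A) ∈ J by
    intro a ha n
    exact H (decompose gA a).support.card a ha le_rfl n
  intro N
  induction N with
  | zero =>
    intro a ha hcard n
    have hsupp : (decompose gA a).support = ∅ := Finset.card_eq_zero.1 (by omega)
    have : n ∉ (decompose gA a).support := hsupp ▸ Finset.notMem_empty n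
    rw [DFinsupp.notMem_support_iff] at this
    rw [this]
    simp
  | succ N ih =>
    intro a ha hcard n
    by_cases hz : (decompose gA a).support.Nonempty
    · set d := (decompose gA a).support.max' hz with hd
      have htop : TopLE gA a d := by
        intro n' hn'
        by_contra h0
        have hmem : n' ∈ (decompose gA a).support := by
          rw [DFinsupp.mem_support_iff]
          exact fun h => h0 (by rw [h]; simp)
        have := Finset.le_max' _ n' hmem
        omega
      have hxd : (decompose gA a d : A) ∈ J := htopJ a ha d htop
      set b := a - (decompose gA a d : A) with hb
      have hbJ : b ∈ J := J.sub_mem ha hxd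
      have hpcb : ∀ i : ℤ, (decompose gA b i : A)
          = (decompose gA a i : A) - (decompose gA ((decompose gA a d : A)) i : A) := by
        intro i
        rw [hb, ← pcHom_apply, map_sub, pcHom_apply, pcHom_apply]
      have hbd : (decompose gA b d : A) = 0 := by
        rw [hpcb d, decompose_of_mem_same gA (SetLike.coe_mem _), sub_self]
      have hbne : ∀ i : ℤ, i ≠ d → (decompose gA b i : A) = (decompose gA a i : A) := by
        intro i hi
        rw [hpcb i, decompose_of_mem_ne gA (SetLike.coe_mem ((decompose gA a) d)) (Ne.symm hi),
          sub_zero]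
      have hsub : (decompose gA b).support ⊆ (decompose gA a).support.erase d := by
        intro i hi
        rw [DFinsupp.mem_support_iff] at hi
        rw [Finset.mem_erase]
        constructor
        · intro hid
          exact hi (Subtype.ext (by rw [hid]; exact hbd))
        · rw [DFinsupp.mem_support_iff]
          intro h0
          apply hi
          by_cases hid : i = d
          · exact Subtype.ext (by rw [hid]; exact hbd)
          · exact Subtype.ext (by rw [hbne i hid, h0])
      have hcb : (decompose gA b).support.card ≤ N := by
        have h1 := Finset.card_le_card hsub
        have h2 : ((decompose gA a).support.erase d).card
            = (decompose gA a).support.card - 1 :=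
          Finset.card_erase_of_mem ((decompose gA a).support.max'_mem hz)
        have h3 : 1 ≤ (decompose gA a).support.card := Finset.card_pos.2 hz
        omega
      by_cases hn : n = d
      · subst hn; exact hxd
      · rw [← hbne n hn]
        exact ih b hbJ hcb n
    · rw [Finset.not_nonempty_iff_eq_empty] at hz
      have : n ∉ (decompose gA a).support := hz ▸ Finset.notMem_empty n
      rw [DFinsupp.notMem_support_iff] at this
      rw [this]
      simp

/-- Package an `A`-stable `k`-submodule as a left ideal. -/
def idealOf (W : Submodule k A) (h : ∀ c w : A, w ∈ W → c * w ∈ W) : Ideal A where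
  carrier := W
  add_mem' := fun ha hb => W.add_mem ha hb
  zero_mem' := W.zero_mem
  smul_mem' := fun c x hx => h c x hx

lemma mem_idealOf {W : Submodule k A} {h} {x : A} : x ∈ idealOf W h ↔ x ∈ W := Iff.rfl

/-- Existence of a maximal graded submodule strictly inside a nonzero graded ideal. -/
lemma exists_maxsub (X : Ideal A) (hX : X ≠ ⊥) :
    ∃ X' : Ideal A, HgI gA X' ∧ X' < X ∧
      ∀ Y : Ideal A, HgI gA Y → X' < Y → Y ≤ X → Y = X := by
  set 𝒮 : Set (Ideal A) := {Y : Ideal A | HgI gA Y ∧ Y < X} with h𝒮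
  have hbot : (⊥ : Ideal A) ∈ 𝒮 := ⟨hgI_bot gA, bot_lt_iff_ne_bot.2 hX⟩
  set ns : Set ℕ := (fun Y : Ideal A => Module.finrank k (Y.restrictScalars k : Submodule k A)) '' 𝒮
    with hns
  have hbdd : BddAbove ns := by
    refine ⟨Module.finrank k A, ?_⟩
    rintro n ⟨Y, _, rfl⟩
    dsimp only
    exact Submodule.finrank_le _
  obtain ⟨X', hX'S, hrank⟩ := Nat.sSup_mem (⟨_, ⟨⊥, hbot, rfl⟩⟩ : ns.Nonempty) hbdd
  dsimp only at hrank
  refine ⟨X', hX'S.1, hX'S.2, ?_⟩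
  intro Y hY hlt hle
  by_contra hne
  have hYS : Y ∈ 𝒮 := ⟨hY, lt_of_le_of_ne hle hne⟩
  have h1 := Set.mem_image_of_mem
    (fun Z : Ideal A => Module.finrank k (Z.restrictScalars k : Submodule k A)) hYS
  have h2 := le_csSup hbdd h1
  have h3 := Submodule.finrank_lt_finrank_of_lt (rs_lt (k := k) hlt)
  omega

/-- Graded Nakayama: multiplying a nonzero graded ideal by the graded radical
strictly decreases it. -/
lemma rad_mul_lt (X : Ideal A) (hgX : HgI gA X) (hne : X ≠ ⊥) :
    ∃ X' : Ideal A, X' < X ∧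
      (gradedRadical gA).restrictScalars k * X.restrictScalars k
        ≤ X'.restrictScalars k := by
  obtain ⟨X', hgX', hltX', hmaxX'⟩ := exists_maxsub gA X hne
  refine ⟨X', hltX', ?_⟩
  have key : ∀ (d : ℤ) (s : A), s ∈ X → s ∈ gA d →
      ∀ r ∈ gradedRadical gA, r * s ∈ X' := by
    intro d s hsX hsd r hr
    by_cases hsX' : s ∈ X'
    · exact Ideal.mul_mem_left X' r hsX'
    · set K : Ideal A := Submodule.comap (LinearMap.toSpanSingleton A A s) X' with hK
      have hKm : ∀ c : A, c ∈ K ↔ c * s ∈ X' := by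
        intro c
        rw [hK, Submodule.mem_comap, LinearMap.toSpanSingleton_apply, smul_eq_mul]
    -- K is a graded ideal
      have hgK : HgI gA K := by
        intro c hc n
        rw [hKm]
        have h1 : ((decompose gA c n : A)) * s = (decompose gA (c * s) (n + d) : A) := by
          rw [pc_mul_homog_right gA hsd c (n + d), show n + d - d = n by ring]
        rw [h1]
        exact hgX' (c * s) ((hKm c).1 hc) (n + d)
      have hKne : K ≠ ⊤ := by
        intro h
        apply hsX'
        have h1 : (1 : A) ∈ K := h ▸ Submodule.mem_top
        have := (hKm 1).1 h1
        rwa [one_mul] at this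
    -- K is a maximal graded ideal
      have hKmax : ∀ K' : Ideal A, IsGradedSubmodule gA K' → K < K' → K' = ⊤ := by
        intro K' hgK' hlt
        have hgK'' := (hgI_iff gA K').1 hgK'
        have hexb : ∃ i : ℤ, ∃ c : A, c ∈ K' ∧ (decompose gA c i : A) ∈ K' ∧
            (decompose gA c i : A) ∉ K := by
          obtain ⟨c, hcK', hcK⟩ := SetLike.exists_of_lt hlt
          by_contra hall
          push_neg at hall
          apply hcK
          rw [← DirectSum.sum_support_decompose gA c]
          exact Submodule.sum_mem _ fun i _ => hall i c hcK' (hgK'' c hcK' i)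
        obtain ⟨i, c, hcK', hbK', hbK⟩ := hexb
        set b : A := (decompose gA c i : A) with hb
        have hbg : b ∈ gA i := SetLike.coe_mem _
        set Y : Ideal A := X' ⊔ Submodule.span A ({b * s} : Set A) with hY
        have hbsX : b * s ∈ X := Ideal.mul_mem_left X b hsX
        have hbs_g : b * s ∈ gA (i + d) := SetLike.mul_mem_graded hbg hsd
        have hgspan : HgI gA (Submodule.span A ({b * s} : Set A)) := by
          intro x hx n
          obtain ⟨c', rfl⟩ := Submodule.mem_span_singleton.1 hx
          rw [smul_eq_mul, pc_mul_homog_right gA hbs_g, ← smul_eq_mul]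
          exact Submodule.smul_mem _ _ (Submodule.subset_span rfl)
        have hgY : HgI gA Y := hgI_sup gA hgX' hgspan
        have hX'Y : X' < Y := by
          refine lt_of_le_of_ne le_sup_left fun h => hbK ?_
          have hbsX' : b * s ∈ X' := by
            rw [h, hY]
            exact Submodule.mem_sup_right (Submodule.subset_span rfl)
          exact (hKm b).2 hbsX'
        have hYX : Y ≤ X := by
          rw [hY]
          refine sup_le hltX'.le ?_
          rw [Submodule.span_le]
          rintro z rfl
          exact hbsX
        have hYeq : Y = X := hmaxX' Y hgY hX'Y hYX
        have hsY : s ∈ Y := hYeq ▸ hsX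
        rw [hY] at hsY
        obtain ⟨x', hx', y, hy, hxy⟩ := Submodule.mem_sup.1 hsY
        obtain ⟨c', rfl⟩ := Submodule.mem_span_singleton.1 hy
        rw [smul_eq_mul] at hxy
        have h1 : (1 - c' * b) * s ∈ X' := by
          have heq : (1 - c' * b) * s = x' := by
            rw [sub_mul, one_mul, mul_assoc, sub_eq_iff_eq_add]
            exact hxy.symm
          rw [heq]
          exact hx'
        have h2 : 1 - c' * b ∈ K' := hlt.le ((hKm _).2 h1)
        have h3 : c' * b ∈ K' := Ideal.mul_mem_left K' c' hbK'
        rw [Ideal.eq_top_iff_one]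
        have h4 := K'.add_mem h2 h3
        rwa [sub_add_cancel] at h4
      have hKmem : K ∈ {N : Ideal A | IsMaxGradedSubmodule gA N} :=
        ⟨(hgI_iff gA K).2 hgK, hKne, hKmax⟩
      have hRK : gradedRadical gA ≤ K := sInf_le hKmem
      exact (hKm r).1 (hRK hr)
  refine Submodule.mul_le.2 fun r hr x hx => ?_
  have hxs : x = ∑ i ∈ (decompose gA x).support, (decompose gA x i : A) :=
    (DirectSum.sum_support_decompose gA x).symm
  have hrx : r * x = ∑ i ∈ (decompose gA x).support, r * (decompose gA x i : A) := by
    conv_lhs => rw [hxs]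
    rw [Finset.mul_sum]
  rw [hrx]
  exact Submodule.sum_mem _ fun i _ =>
    key i _ (hgX x hx i) (SetLike.coe_mem _) r hr

/-- The graded radical is graded. -/
lemma hgR : HgI gA (gradedRadical gA) := by
  intro a ha n
  have hmem := Submodule.mem_sInf.1 ha
  refine Submodule.mem_sInf.2 fun N hN => ?_
  exact ((hgI_iff gA N).1 hN.1) a (hmem N hN) n

/-- The graded radical is nilpotent. -/
lemma R_pow_bot :
    ∃ m : ℕ, ((gradedRadical gA).restrictScalars k) ^ (m + 1) = ⊥ := by
  set R : Ideal A := gradedRadical gA with hR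
  set Rk : Submodule k A := R.restrictScalars k with hRk
  have hstable : ∀ n : ℕ, ∀ c x : A, x ∈ (Rk ^ (n + 1) : Submodule k A) →
      c * x ∈ (Rk ^ (n + 1) : Submodule k A) := by
    intro n c x hx
    have hdec : (Rk ^ (n + 1) : Submodule k A) = Rk * Rk ^ n := pow_succ' Rk n
    rw [hdec] at hx ⊢
    refine Submodule.mul_induction_on hx ?_ ?_
    · intro r hr y hy
      rw [← mul_assoc]
      exact Submodule.mul_mem_mul (Ideal.mul_mem_left R c hr) hy
    · intro y z hy hz
      rw [mul_add]
      exact Submodule.add_mem _ hy hz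
  have hgRk : HgK gA Rk := fun a ha n => hgR gA a ha n
  have hgpow : ∀ n : ℕ, HgK gA (Rk ^ (n + 1) : Submodule k A) := by
    intro n
    induction n with
    | zero => rw [pow_one]; exact hgRk
    | succ n ih =>
      have hdec : (Rk ^ (n + 1 + 1) : Submodule k A) = Rk ^ (n + 1) * Rk := pow_succ Rk (n + 1)
      rw [hdec]
      exact hgK_mul gA ih hgRk
  by_contra hall
  push_neg at hall
  have hdesc : ∀ n : ℕ, Module.finrank k (Rk ^ (n + 1 + 1) : Submodule k A)
      < Module.finrank k (Rk ^ (n + 1) : Submodule k A) := by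
    intro n
    set Xn : Ideal A := idealOf (Rk ^ (n + 1)) (hstable n) with hXn
    have hXk : Xn.restrictScalars k = Rk ^ (n + 1) := rfl
    have hXne : Xn ≠ ⊥ := by
      intro h
      apply hall n
      rw [eq_bot_iff]
      intro x hx
      have : x ∈ Xn := hx
      rw [h] at this
      exact this
    have hgXn : HgI gA Xn := fun a ha i => hgpow n a ha i
    obtain ⟨X', hlt, hle⟩ := rad_mul_lt gA Xn hgXn hXne
    have h1 : (Rk ^ (n + 1 + 1) : Submodule k A) ≤ X'.restrictScalars k := by
      have hdec : (Rk ^ (n + 1 + 1) : Submodule k A) = Rk * Rk ^ (n + 1) := pow_succ' Rk (n + 1)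
      rw [hdec]
      exact hle
    calc Module.finrank k (Rk ^ (n + 1 + 1) : Submodule k A)
        ≤ Module.finrank k (X'.restrictScalars k : Submodule k A) := Submodule.finrank_mono h1
      _ < Module.finrank k (Xn.restrictScalars k : Submodule k A) :=
          Submodule.finrank_lt_finrank_of_lt (rs_lt (k := k) hlt)
      _ = Module.finrank k (Rk ^ (n + 1) : Submodule k A) := by rw [hXk]
  have hb : ∀ n : ℕ, Module.finrank k (Rk ^ (n + 1) : Submodule k A) + n
      ≤ Module.finrank k (Rk ^ 1 : Submodule k A) := by
    intro n
    induction n with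
    | zero => simp
    | succ n ih =>
      have h1 := hdesc n
      omega
  have := hb (Module.finrank k (Rk ^ 1 : Submodule k A) + 1)
  omega

/-- The Jacobson radical (of any ring) is a two-sided ideal. -/
lemma jac_mul_right {x : A} (hx : x ∈ sInf {I : Ideal A | I.IsMaximal}) (a : A) :
    x * a ∈ sInf {I : Ideal A | I.IsMaximal} := by
  rw [Submodule.mem_sInf]
  intro I hI
  have hImax : Ideal.IsMaximal I := hI
  by_cases haI : a ∈ I
  · exact Ideal.mul_mem_left I x haI
  · set K : Ideal A := Submodule.comap (LinearMap.toSpanSingleton A A a) I with hK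
    have hKm : ∀ c : A, c ∈ K ↔ c * a ∈ I := by
      intro c
      rw [hK, Submodule.mem_comap, LinearMap.toSpanSingleton_apply, smul_eq_mul]
    have hKmax : Ideal.IsMaximal K := by
      constructor
      constructor
      · intro h
        apply haI
        have h1 : (1 : A) ∈ K := h ▸ Submodule.mem_top
        have := (hKm 1).1 h1
        rwa [one_mul] at this
      · intro K' hlt
        obtain ⟨b, hbK', hbK⟩ := SetLike.exists_of_lt hlt
        have hba : b * a ∉ I := fun h => hbK ((hKm b).2 h)
        have hlt2 : I < I ⊔ Submodule.span A ({b * a} : Set A) := by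
          refine lt_of_le_of_ne le_sup_left fun h => hba ?_
          rw [h]
          exact Submodule.mem_sup_right (Submodule.subset_span rfl)
        have htop : I ⊔ Submodule.span A ({b * a} : Set A) = ⊤ := hImax.out.2 _ hlt2
        have h1 : (1 : A) ∈ I ⊔ Submodule.span A ({b * a} : Set A) := htop ▸ Submodule.mem_top
        obtain ⟨i, hi, y, hy, hiy⟩ := Submodule.mem_sup.1 h1
        obtain ⟨c, rfl⟩ := Submodule.mem_span_singleton.1 hy
        rw [smul_eq_mul] at hiy
        have hcb : c * (b * a) = 1 - i := by rw [← hiy]; abel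
        have h2 : 1 - a * c * b ∈ K := by
          rw [hKm]
          have expand : (1 - a * c * b) * a = a - a * (c * (b * a)) := by noncomm_ring
          have heq : (1 - a * c * b) * a = a * i := by
            rw [expand, hcb, mul_sub, mul_one]
            abel
          rw [heq]
          exact Ideal.mul_mem_left I a hi
        have h3 : 1 - a * c * b ∈ K' := hlt.le h2
        have h4 : a * c * b ∈ K' := Ideal.mul_mem_left K' (a * c) hbK'
        rw [Ideal.eq_top_iff_one]
        have h5 := K'.add_mem h3 h4
        rwa [sub_add_cancel] at h5
    have hxK : x ∈ K := (Submodule.mem_sInf.1 hx) K hKmax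
    exact (hKm x).1 hxK

end Aux


/-- Let `Ā` be a finite-dimensional ℤ-graded `k`-algebra.  Then the
Jacobson radical of `Ā` (the intersection of all maximal left ideals of `Ā`) coincides
with the graded radical `rad^gr(Ā)` (the intersection of all maximal graded left
ideals); in particular, the Jacobson radical of `Ā` is a homogeneous (graded)
two-sided ideal. -/
theorem statement7 {k A : Type} [Field k] [Ring A] [Algebra k A] [FiniteDimensional k A]
    (gA : ℤ → Submodule k A) [GradedAlgebra gA] :
    sInf {I : Ideal A | I.IsMaximal} = gradedRadical gA ∧
      IsGradedSubmodule gA (sInf {I : Ideal A | I.IsMaximal} : Ideal A) ∧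
      ∀ x ∈ sInf {I : Ideal A | I.IsMaximal}, ∀ a : A,
        x * a ∈ sInf {I : Ideal A | I.IsMaximal} := by
  have hgJ' : HgI gA (sInf {I : Ideal A | I.IsMaximal}) := hgJ gA
  have h2 : IsGradedSubmodule gA (sInf {I : Ideal A | I.IsMaximal} : Ideal A) :=
    (hgI_iff gA _).2 hgJ'
  refine ⟨?_, h2, fun x hx a => jac_mul_right hx a⟩
  apply le_antisymm
  · -- J ≤ rad^gr
    refine le_sInf fun N hN => ?_
    by_contra hnle
    have hgN := (hgI_iff gA N).1 hN.1
    have hlt : N < sInf {I : Ideal A | I.IsMaximal} ⊔ N := by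
      refine lt_of_le_of_ne le_sup_right fun h => hnle ?_
      exact le_sup_left.trans h.symm.le
    have htop : sInf {I : Ideal A | I.IsMaximal} ⊔ N = ⊤ :=
      hN.2.2 _ ((hgI_iff gA _).2 (hgI_sup gA hgJ' hgN)) hlt
    have h1 : (1 : A) ∈ sInf {I : Ideal A | I.IsMaximal} ⊔ N := htop ▸ Submodule.mem_top
    obtain ⟨j, hj, nn, hn, hjn⟩ := Submodule.mem_sup.1 h1
    obtain ⟨u, hu⟩ := exists_left_inv hj
    have hnn : nn = 1 - j := by rw [← hjn]; abel
    apply hN.2.1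
    rw [Ideal.eq_top_iff_one]
    have h3 : u * nn ∈ N := Ideal.mul_mem_left N u hn
    rwa [hnn, hu] at h3
  · -- rad^gr ≤ J
    obtain ⟨m, hm⟩ := R_pow_bot gA
    refine le_sInf fun I hI => ?_
    have hImax : Ideal.IsMaximal I := hI
    by_contra hnle
    obtain ⟨x, hxR, hxI⟩ := SetLike.not_le_iff_exists.1 hnle
    have hlt : I < I ⊔ Submodule.span A ({x} : Set A) := by
      refine lt_of_le_of_ne le_sup_left fun h => hxI ?_
      rw [h]
      exact Submodule.mem_sup_right (Submodule.subset_span rfl)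
    have htop : I ⊔ Submodule.span A ({x} : Set A) = ⊤ := hImax.out.2 _ hlt
    have h1 : (1 : A) ∈ I ⊔ Submodule.span A ({x} : Set A) := htop ▸ Submodule.mem_top
    obtain ⟨i, hi, y, hy, hiy⟩ := Submodule.mem_sup.1 h1
    obtain ⟨c, rfl⟩ := Submodule.mem_span_singleton.1 hy
    rw [smul_eq_mul] at hiy
    have hcx : c * x ∈ (gradedRadical gA).restrictScalars k :=
      Ideal.mul_mem_left _ c hxR
    have hunit : IsUnit (1 - c * x) := unit_one_sub_of_pow_bot hm hcx
    have hieq : i = 1 - c * x := by rw [← hiy]; abel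
    exact hImax.ne_top (Ideal.eq_top_of_isUnit_mem _ hi (hieq ▸ hunit))
end

section
/- There exists k ≥ 1 such that (rad^gr(A))^k ⊆ V·A. -/
set_option maxHeartbeats 1000000
set_option synthInstance.maxHeartbeats 400000


section Aux

variable {k A : Type} [Field k] [Ring A] [Algebra k A]
variable (gA : ℤ → Submodule k A) [GradedAlgebra gA]

private lemma aux_decompose_mul_right {w : A} {δ : ℤ} (hw : w ∈ gA δ) (a : A) (n : ℤ) :
    (DirectSum.decompose gA (a * w) n : A) = (DirectSum.decompose gA a (n - δ) : A) * w := by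
  lift w to gA δ using hw
  have h1 : DirectSum.decompose gA (a * (w : A)) =
      DirectSum.decompose gA a * DirectSum.of (fun i => ↥(gA i)) δ w := by
    rw [DirectSum.decompose_mul, DirectSum.decompose_coe]
  have h2 := DirectSum.coe_mul_of_apply_add (A := gA) (DirectSum.decompose gA a) w (n - δ)
  have hnn : n - δ + δ = n := by ring
  rw [hnn] at h2
  rw [h1]
  exact h2

/-- Closure under homogeneous components. -/
private def HCl (p : Submodule k A) : Prop :=
  ∀ a ∈ p, ∀ d : ℤ, (DirectSum.decompose gA a d : A) ∈ p

private lemma HCl.sup' {p q : Submodule k A} (hp : HCl gA p) (hq : HCl gA q) :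
    HCl gA (p ⊔ q) := by
  intro a ha d
  obtain ⟨x, hx, y, hy, rfl⟩ := Submodule.mem_sup.mp ha
  rw [DirectSum.decompose_add, DirectSum.add_apply, Submodule.coe_add]
  exact Submodule.add_mem _ (Submodule.mem_sup_left (hp x hx d))
    (Submodule.mem_sup_right (hq y hy d))

private lemma HCl.mul' {p q : Submodule k A} (hp : HCl gA p) (hq : HCl gA q) :
    HCl gA (p * q) := by
  classical
  intro a ha d
  refine Submodule.mul_induction_on ha (fun x hx y hy => ?_) (fun x y hx hy => ?_)
  · rw [DirectSum.decompose_mul, DirectSum.coe_mul_apply]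
    exact Submodule.sum_mem _ fun ij _ =>
      Submodule.mul_mem_mul (hp x hx ij.1) (hq y hy ij.2)
  · rw [DirectSum.decompose_add, DirectSum.add_apply, Submodule.coe_add]
    exact Submodule.add_mem _ hx hy

private lemma isGraded_iff (N : Ideal A) :
    IsGradedSubmodule gA N ↔ Ideal.IsHomogeneous gA N := by
  classical
  constructor
  · intro h
    rw [IsGradedSubmodule] at h
    rw [show N = Ideal.span (⋃ n : ℤ, ((N : Set A) ∩ (gA n : Set A))) from h]
    apply Ideal.homogeneous_span
    rintro x hx
    obtain ⟨n, hxn⟩ := Set.mem_iUnion.mp hx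
    exact ⟨n, hxn.2⟩
  · intro h
    rw [IsGradedSubmodule]
    apply le_antisymm
    · intro a ha
      rw [← DirectSum.sum_support_decompose gA a]
      refine Submodule.sum_mem _ fun d _ => Submodule.subset_span ?_
      exact Set.mem_iUnion.mpr ⟨d, h d ha, SetLike.coe_mem _⟩
    · rw [Submodule.span_le]
      rintro x hx
      obtain ⟨n, hxn⟩ := Set.mem_iUnion.mp hx
      exact hxn.1

end Aux

/-- In the setup where `V` is a finite-dimensional graded `k`-vector
space in positive degrees and `A` is a ℤ-graded `k`-algebra which is a graded
`S(V)`-algebra (via the degree-preserving map `φ : V →ₗ[k] A` with central image),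
finitely generated as an `S(V)`-module: there exists `m ≥ 1` such that
`(rad^gr(A))^m ⊆ V·A` (powers and products being taken as `k`-subspaces of `A`, and
`V·A = Ideal.span (range φ)` the ideal generated by the image of `V`). -/
theorem statement9 {k V A : Type} [Field k]
    [AddCommGroup V] [Module k V] [FiniteDimensional k V]
    (gV : ℤ → Submodule k V) [DirectSum.Decomposition gV]
    (hVpos : ∀ n : ℤ, n ≤ 0 → gV n = ⊥)
    [Ring A] [Algebra k A] (gA : ℤ → Submodule k A) [GradedAlgebra gA]
    (φ : V →ₗ[k] A)
    (hcentral : ∀ (v : V) (a : A), φ v * a = a * φ v)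
    (hgraded : ∀ n : ℤ, ∀ v ∈ gV n, φ v ∈ gA n)
    (hfin : ∃ s : Finset A, ∀ a : A,
      a ∈ Submodule.span k {x : A | ∃ c ∈ Algebra.adjoin k (Set.range ⇑φ), ∃ t ∈ s, x = c * t}) :
    ∃ m : ℕ, 1 ≤ m ∧
      (Submodule.restrictScalars k (gradedRadical gA)) ^ m ≤
        Submodule.restrictScalars k (Ideal.span (Set.range ⇑φ)) := by
  classical
  obtain ⟨s, hs⟩ := hfin
  set I : Ideal A := Ideal.span (Set.range ⇑φ) with hIdef
  set J : Ideal A := gradedRadical gA with hJdef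
  set Jk : Submodule k A := Submodule.restrictScalars k J with hJkdef
  set Ik : Submodule k A := Submodule.restrictScalars k I with hIkdef
  -- `I` is stable under right multiplication (uses centrality).
  have hIr : ∀ y ∈ I, ∀ b : A, y * b ∈ I := by
    intro y hy
    induction hy using Submodule.span_induction with
    | mem x hx =>
      intro b
      obtain ⟨v, rfl⟩ := hx
      rw [hcentral]
      exact I.mul_mem_left b (Ideal.subset_span ⟨v, rfl⟩)
    | zero => intro b; rw [zero_mul]; exact I.zero_mem
    | add x y _ _ hx hy => intro b; rw [add_mul]; exact I.add_mem (hx b) (hy b)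
    | smul a x _ hx =>
      intro b
      rw [smul_eq_mul, mul_assoc]
      exact I.mul_mem_left a (hx b)
  -- `I` is a homogeneous ideal.
  have hIspan2 : I = Ideal.span (⋃ n : ℤ, ⇑φ '' (gV n : Set V)) := by
    apply le_antisymm
    · rw [hIdef, Ideal.span_le]
      rintro x ⟨v, rfl⟩
      rw [← DirectSum.sum_support_decompose gV v, map_sum]
      exact Submodule.sum_mem _ fun d _ => Ideal.subset_span
        (Set.mem_iUnion.mpr ⟨d, ⟨_, SetLike.coe_mem _, rfl⟩⟩)
    · rw [Ideal.span_le]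
      rintro x hx
      obtain ⟨n, v, _, rfl⟩ := Set.mem_iUnion.mp hx
      exact Ideal.subset_span ⟨v, rfl⟩
  have hIhom : Ideal.IsHomogeneous gA I := by
    rw [hIspan2]
    apply Ideal.homogeneous_span
    rintro x hx
    obtain ⟨n, v, hv, rfl⟩ := Set.mem_iUnion.mp hx
    exact ⟨n, hgraded n v hv⟩
  -- `J` is a homogeneous ideal.
  have hJhom : Ideal.IsHomogeneous gA J := by
    intro i r hr
    have hr' : r ∈ sInf {N : Submodule A A | IsMaxGradedSubmodule gA N} := hr
    have : ∀ N ∈ {N : Submodule A A | IsMaxGradedSubmodule gA N},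
        (DirectSum.decompose gA r i : A) ∈ N := by
      intro N hN
      exact ((isGraded_iff gA N).mp hN.1) i (Submodule.mem_sInf.mp hr' N hN)
    exact Submodule.mem_sInf.mpr this
  have hJle : ∀ N : Submodule A A, IsMaxGradedSubmodule gA N → J ≤ N := by
    intro N hN
    exact sInf_le hN
  -- component closure facts
  have hHCJk : HCl gA Jk := fun a ha d => hJhom d ha
  have hHCIk : HCl gA Ik := fun a ha d => hIhom d ha
  have hHCpow : ∀ m : ℕ, HCl gA (Jk ^ (m + 1)) := by
    intro m
    induction m with
    | zero => rw [pow_one]; exact hHCJk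
    | succ n ih =>
      rw [pow_succ]
      exact HCl.mul' gA ih hHCJk
  -- A-stability
  have hASmul : ∀ p q : Submodule k A, (∀ a : A, ∀ x ∈ p, a * x ∈ p) →
      ∀ a : A, ∀ x ∈ p * q, a * x ∈ p * q := by
    intro p q hp a x hx
    refine Submodule.mul_induction_on hx (fun m hm n hn => ?_) (fun x y hx hy => ?_)
    · rw [← mul_assoc]
      exact Submodule.mul_mem_mul (hp a m hm) hn
    · rw [mul_add]
      exact Submodule.add_mem _ hx hy
  have hASJk : ∀ a : A, ∀ x ∈ Jk, a * x ∈ Jk := fun a x hx => J.mul_mem_left a hx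
  have hASpow : ∀ m : ℕ, ∀ a : A, ∀ x ∈ Jk ^ (m + 1), a * x ∈ Jk ^ (m + 1) := by
    intro m
    rw [pow_succ']
    exact hASmul Jk (Jk ^ m) hASJk
  have hASIk : ∀ a : A, ∀ x ∈ Ik, a * x ∈ Ik := fun a x hx => I.mul_mem_left a hx
  -- powers descend
  have hdesc : ∀ m : ℕ, Jk ^ (m + 2) ≤ Jk ^ (m + 1) := by
    intro m
    rw [show m + 2 = (m + 1) + 1 from rfl, pow_succ']
    exact Submodule.mul_le.mpr fun j hj x hx => hASpow m j x hx
  have hJkIk : Jk * Ik ≤ Ik :=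
    Submodule.mul_le.mpr fun j _ x hx => I.mul_mem_left j hx
  -- finite dimensionality of A ⧸ Ik
  have hadj : ∀ c ∈ Algebra.adjoin k (Set.range ⇑φ), ∃ α : k, c - algebraMap k A α ∈ I := by
    intro c hc
    induction hc using Algebra.adjoin_induction with
    | mem x hx =>
      refine ⟨0, ?_⟩
      rw [map_zero, sub_zero]
      exact Ideal.subset_span hx
    | algebraMap r => exact ⟨r, by rw [sub_self]; exact I.zero_mem⟩
    | add x y _ _ hx hy =>
      obtain ⟨α, hα⟩ := hx
      obtain ⟨β, hβ⟩ := hy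
      refine ⟨α + β, ?_⟩
      rw [map_add]
      have : x + y - (algebraMap k A α + algebraMap k A β)
          = (x - algebraMap k A α) + (y - algebraMap k A β) := by abel
      rw [this]
      exact I.add_mem hα hβ
    | mul x y _ _ hx hy =>
      obtain ⟨α, hα⟩ := hx
      obtain ⟨β, hβ⟩ := hy
      refine ⟨α * β, ?_⟩
      have : x * y - algebraMap k A (α * β)
          = x * (y - algebraMap k A β) + (x - algebraMap k A α) * algebraMap k A β := by
        rw [map_mul]; noncomm_ring
      rw [this]
      exact I.add_mem (I.mul_mem_left x hβ) (hIr _ hα (algebraMap k A β))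
  haveI hQfin : FiniteDimensional k (A ⧸ Ik) := by
    have hspan : Submodule.span k (⇑Ik.mkQ '' (s : Set A)) = ⊤ := by
      rw [eq_top_iff]
      rintro q -
      obtain ⟨a, rfl⟩ := Ik.mkQ_surjective q
      have ha := hs a
      have : Ik.mkQ a ∈ Submodule.map Ik.mkQ (Submodule.span k
          {x : A | ∃ c ∈ Algebra.adjoin k (Set.range ⇑φ), ∃ t ∈ s, x = c * t}) :=
        Submodule.mem_map_of_mem ha
      rw [Submodule.map_span] at this
      refine Submodule.span_le.mpr ?_ this
      rintro y ⟨x, ⟨c, hc, t, ht, rfl⟩, rfl⟩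
      obtain ⟨α, hα⟩ := hadj c hc
      have hct : Ik.mkQ (c * t) = α • Ik.mkQ t := by
        have : c * t - α • t ∈ Ik := by
          have : c * t - α • t = (c - algebraMap k A α) * t := by
            rw [sub_mul, Algebra.smul_def]
          rw [this]
          exact hIr _ hα t
        rw [← map_smul]
        exact (Submodule.Quotient.eq Ik).mpr this
      rw [hct]
      exact Submodule.smul_mem _ α (Submodule.subset_span ⟨t, ht, rfl⟩)
    exact ⟨⟨s.image Ik.mkQ, by rw [Finset.coe_image]; exact hspan⟩⟩
  -- the descending chain
  set F : ℕ → Submodule k A := fun m => Jk ^ (m + 1) ⊔ Ik with hFdef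
  have hIkF : ∀ m, Ik ≤ F m := fun m => le_sup_right
  have hFanti : ∀ m, F (m + 1) ≤ F m := fun m => sup_le_sup_right (hdesc m) Ik
  have hstab : ∃ m : ℕ, F (m + 1) = F m := by
    by_contra hne
    push_neg at hne
    set g : ℕ → ℕ := fun m => Module.finrank k (Submodule.map Ik.mkQ (F m)) with hgdef
    have hstrict : ∀ m, g (m + 1) < g m := by
      intro m
      have hlt : Submodule.map Ik.mkQ (F (m + 1)) < Submodule.map Ik.mkQ (F m) := by
        refine lt_of_le_of_ne (Submodule.map_mono (hFanti m)) ?_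
        intro heq
        apply hne m
        have h1 := congrArg (Submodule.comap Ik.mkQ) heq
        rw [Submodule.comap_map_eq, Submodule.comap_map_eq, Submodule.ker_mkQ,
          sup_eq_left.mpr (hIkF (m + 1)), sup_eq_left.mpr (hIkF m)] at h1
        exact h1
      exact Submodule.finrank_lt_finrank_of_lt hlt
    have hbound : ∀ m : ℕ, g m + m ≤ g 0 := by
      intro m
      induction m with
      | zero => simp
      | succ n ih => have := hstrict n; omega
    have := hbound (g 0 + 1)
    omega
  obtain ⟨m, hFm⟩ := hstab
  set W : Submodule k A := F m with hWdef
  -- fixed point equation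
  have hfix : Jk * W ⊔ Ik = W := by
    have h1 : Jk * W ⊔ Ik = Jk ^ (m + 2) ⊔ (Jk * Ik ⊔ Ik) := by
      rw [hWdef, hFdef]
      simp only []
      rw [Submodule.mul_sup, ← pow_succ']
      rw [sup_assoc]
    rw [h1, sup_eq_right.mpr hJkIk]
    calc Jk ^ (m + 2) ⊔ Ik = F (m + 1) := rfl
      _ = F m := hFm
  have hWc : HCl gA W := HCl.sup' gA (hHCpow m) hHCIk
  have hWA : ∀ a : A, ∀ x ∈ W, a * x ∈ W := by
    intro a x hx
    obtain ⟨y, hy, z, hz, rfl⟩ := Submodule.mem_sup.mp hx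
    rw [mul_add]
    exact Submodule.add_mem _ (Submodule.mem_sup_left (hASpow m a y hy))
      (Submodule.mem_sup_right (hASIk a z hz))
  -- Nakayama: W = Ik
  have hWeq : W = Ik := by
    by_contra hne
    -- pick a maximal homogeneous ideal P with Ik ≤ P ≤ W, P ≠ W
    set S : Set (Submodule A A) := {P | Ideal.IsHomogeneous gA P ∧
      Ik ≤ Submodule.restrictScalars k P ∧ Submodule.restrictScalars k P ≤ W ∧
      Submodule.restrictScalars k P ≠ W} with hSdef
    have hIS : I ∈ S := ⟨hIhom, le_refl Ik, hIkF m, fun h => hne h.symm⟩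
    set r : Submodule A A → ℕ :=
      fun P => Module.finrank k (Submodule.map Ik.mkQ (Submodule.restrictScalars k P)) with hrdef
    have hbdd : BddAbove (r '' S) := by
      refine ⟨Module.finrank k (A ⧸ Ik), ?_⟩
      rintro n ⟨P, _, rfl⟩
      exact Submodule.finrank_le _
    have hmem := Nat.sSup_mem (⟨r I, ⟨I, hIS, rfl⟩⟩ : (r '' S).Nonempty) hbdd
    obtain ⟨P, hPS, hPr⟩ := hmem
    have hPmax : ∀ Q : Submodule A A, Q ∈ S → r Q ≤ r P := by
      intro Q hQ
      rw [hPr]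
      exact le_csSup hbdd ⟨Q, hQ, rfl⟩
    obtain ⟨hPhom, hIkP, hPW, hPneW⟩ := hPS
    -- maximality of P among homogeneous ideals inside W
    have hmax : ∀ Q : Submodule A A, Ideal.IsHomogeneous gA Q → P < Q →
        Submodule.restrictScalars k Q ≤ W → Submodule.restrictScalars k Q = W := by
      intro Q hQhom hPQ hQW
      by_contra hQneW
      have hQS : Q ∈ S := ⟨hQhom, le_trans hIkP (fun x hx => hPQ.le hx), hQW, hQneW⟩
      have hlt : Submodule.map Ik.mkQ (Submodule.restrictScalars k P)
          < Submodule.map Ik.mkQ (Submodule.restrictScalars k Q) := by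
        refine lt_of_le_of_ne (Submodule.map_mono fun x hx => hPQ.le hx) ?_
        intro heq
        have h1 := congrArg (Submodule.comap Ik.mkQ) heq
        rw [Submodule.comap_map_eq, Submodule.comap_map_eq, Submodule.ker_mkQ,
          sup_eq_left.mpr hIkP, sup_eq_left.mpr hQS.2.1] at h1
        exact hPQ.ne (Submodule.restrictScalars_injective k A A h1)
      have hlt2 := Submodule.finrank_lt_finrank_of_lt hlt
      have hle2 := hPmax Q hQS
      simp only [hrdef] at hle2
      omega
    -- key: J * (homogeneous element of W) ∈ P
    have hkey : ∀ j ∈ J, ∀ (δ : ℤ) (w : A), w ∈ gA δ → w ∈ W → j * w ∈ P := by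
      intro j hj δ w hwδ hwW
      by_cases hwP : w ∈ P
      · exact Ideal.mul_mem_left P j hwP
      · set f : A →ₗ[A] A := LinearMap.toSpanSingleton A A w with hfdef
        have hfapp : ∀ a : A, f a = a * w := fun a => by
          rw [hfdef, LinearMap.toSpanSingleton_apply, smul_eq_mul]
        set Nw : Submodule A A := Submodule.comap f P with hNwdef
        have hNmem : ∀ a : A, a ∈ Nw ↔ a * w ∈ P := by
          intro a
          rw [hNwdef, Submodule.mem_comap, hfapp]
        have hNhom : Ideal.IsHomogeneous gA Nw := by
          intro i a ha
          rw [hNmem] at ha ⊢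
          have hdm := aux_decompose_mul_right gA hwδ a (i + δ)
          have : i + δ - δ = i := by ring
          rw [this] at hdm
          rw [← hdm]
          exact hPhom (i + δ) ha
        have hNtop : Nw ≠ ⊤ := by
          intro htop
          apply hwP
          have h1 : (1 : A) ∈ Nw := htop ▸ Submodule.mem_top
          have := (hNmem 1).mp h1
          rwa [one_mul] at this
        have hNmax : IsMaxGradedSubmodule gA Nw := by
          refine ⟨(isGraded_iff gA Nw).mpr hNhom, hNtop, ?_⟩
          intro N' hN'g hltN
          have hN'hom := (isGraded_iff gA N').mp hN'g
          obtain ⟨c, hcN', hcNw⟩ := SetLike.exists_of_lt hltN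
          have hex : ∃ d : ℤ, (DirectSum.decompose gA c d : A) ∉ Nw := by
            by_contra hall
            push_neg at hall
            apply hcNw
            rw [← DirectSum.sum_support_decompose gA c]
            exact Submodule.sum_mem _ fun d _ => hall d
          obtain ⟨d, hd⟩ := hex
          set b : A := (DirectSum.decompose gA c d : A) with hbdef
          have hbN' : b ∈ N' := hN'hom d hcN'
          set Qb : Submodule A A := P ⊔ Submodule.map f N' with hQbdef
          have hmapHom : Ideal.IsHomogeneous gA (Submodule.map f N') := by
            intro i x hx
            obtain ⟨c', hc', rfl⟩ := hx
            rw [hfapp]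
            have hdm := aux_decompose_mul_right gA hwδ c' i
            rw [hdm]
            exact ⟨DirectSum.decompose gA c' (i - δ), hN'hom (i - δ) hc', (hfapp _)⟩
          have hQhom : Ideal.IsHomogeneous gA Qb := Ideal.IsHomogeneous.sup hPhom hmapHom
          have hbwQ : b * w ∈ Qb := by
            apply Submodule.mem_sup_right
            exact ⟨b, hbN', hfapp b⟩
          have hPltQ : P < Qb := by
            refine lt_of_le_of_ne le_sup_left ?_
            intro heq
            apply hd
            rw [hNmem, hbdef]
            rw [← heq] at hbwQ
            exact hbwQ
          have hQbW : Submodule.restrictScalars k Qb ≤ W := by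
            intro x hx
            obtain ⟨p, hp, y, hy, rfl⟩ := Submodule.mem_sup.mp hx
            obtain ⟨c', _, rfl⟩ := hy
            refine Submodule.add_mem _ (hPW hp) ?_
            rw [hfapp]
            exact hWA c' w hwW
          have hQeqW := hmax Qb hQhom hPltQ hQbW
          have hwQ : w ∈ Qb := by
            have : w ∈ Submodule.restrictScalars k Qb := hQeqW ▸ hwW
            exact this
          obtain ⟨p, hp, y, hy, hsum⟩ := Submodule.mem_sup.mp hwQ
          obtain ⟨c', hc'N', rfl⟩ := hy
          have h1c : (1 - c') * w ∈ P := by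
            have : (1 - c') * w = p := by
              have hsum' : p + c' * w = w := by rw [← hfapp c']; exact hsum
              rw [sub_mul, one_mul]
              exact (eq_sub_of_add_eq hsum').symm
            rw [this]
            exact hp
          have h1cNw : (1 - c') ∈ Nw := (hNmem _).mpr h1c
          have h1N' : (1 : A) ∈ N' := by
            have := N'.add_mem (hltN.le h1cNw) hc'N'
            rwa [sub_add_cancel] at this
          exact Submodule.eq_top_iff'.mpr fun a => by
            simpa using N'.smul_mem a h1N'
        have hJNw : J ≤ Nw := hJle Nw hNmax
        exact (hNmem j).mp (hJNw hj)
    -- conclude W ≤ P, contradiction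
    have hWleP : W ≤ Submodule.restrictScalars k P := by
      rw [← hfix]
      refine sup_le ?_ hIkP
      refine Submodule.mul_le.mpr fun j hj x hx => ?_
      have hxsum : x = ∑ d ∈ (DirectSum.decompose gA x).support,
          (DirectSum.decompose gA x d : A) := (DirectSum.sum_support_decompose gA x).symm
      have : j * x ∈ P := by
        rw [hxsum, Finset.mul_sum]
        refine Submodule.sum_mem _ fun d _ => ?_
        exact hkey j hj d _ (SetLike.coe_mem _) (hWc x hx d)
      exact this
    exact hPneW (le_antisymm hPW hWleP)
  refine ⟨m + 1, le_add_self, ?_⟩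
  calc Jk ^ (m + 1) ≤ W := le_sup_left
    _ = Ik := hWeq
end
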